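/- arXiv:1306.3498 — 9 statements merged into one kernel-verified Lean document; each statement's English description precedes it below -/
import Mathlib

section
/- Let (X,d) be a complete metric space, f, g : X → X with f(X) ⊆ g(X) and g(X) closed. Suppose there exist α : X × X → [0,∞) and a (c)-comparison function ψ such that α(gx,gy)·d(fx,fy) ≤ ψ(M(gx,gy)) for all x,y ∈ X, where M(gx,gy) = max{d(gx,gy), (d(gx,fx)+d(gy,fy))/2, (d(gx,fy)+d(gy,fx))/2}. Assume: (i) f is α-admissible with respect to g (α(gx,gy) ≥ 1 implies α(fx,fy) ≥ 1); (ii) there exists x₀ ∈ X with α(gx₀, fx₀) ≥ 1; (iii) whenever {gxₙ} is a sequence with α(gxₙ, gxₙ₊₁) ≥ 1 for all n and gxₙ → gz ∈ g(X), there is a subsequence {gx_{n(k)}} with α(gx_{n(k)}, gz) ≥ 1 for all k. Then f and g have a coincidence point, i.e., there exists z ∈ X with fz = gz. -/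
open Filter Topology

theorem coincidence_point_generalized_alpha_psi
    {X : Type*} [MetricSpace X] [CompleteSpace X]
    (f g : X → X) (hrange : Set.range f ⊆ Set.range g)
    (hclosed : IsClosed (Set.range g))
    (α : X → X → ℝ) (hα : ∀ x y, 0 ≤ α x y)
    (ψ : ℝ → ℝ)
    (hmono : ∀ s t : ℝ, 0 ≤ s → s ≤ t → ψ s ≤ ψ t)
    (hnonneg : ∀ t : ℝ, 0 ≤ t → 0 ≤ ψ t)
    (hsum : ∀ t : ℝ, 0 < t → Summable (fun n : ℕ => ψ^[n + 1] t))
    (hcontr : ∀ x y : X, α (g x) (g y) * dist (f x) (f y) ≤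
      ψ (max (dist (g x) (g y)) (max ((dist (g x) (f x) + dist (g y) (f y)) / 2)
        ((dist (g x) (f y) + dist (g y) (f x)) / 2))))
    (hadm : ∀ x y : X, 1 ≤ α (g x) (g y) → 1 ≤ α (f x) (f y))
    (hx0 : ∃ x0 : X, 1 ≤ α (g x0) (f x0))
    (hreg : ∀ (x : ℕ → X) (z : X), (∀ n, 1 ≤ α (g (x n)) (g (x (n + 1)))) →
      Tendsto (fun n => g (x n)) atTop (𝓝 (g z)) →
      ∃ φ : ℕ → ℕ, StrictMono φ ∧ ∀ k, 1 ≤ α (g (x (φ k))) (g z)) :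
    ∃ z : X, f z = g z := by
  -- ψ t < t for every t > 0
  have hlt : ∀ t : ℝ, 0 < t → ψ t < t := by
    intro t ht
    by_contra hcon
    push_neg at hcon
    have hge : ∀ n : ℕ, t ≤ ψ^[n + 1] t := by
      intro n
      induction n with
      | zero => simpa using hcon
      | succ n ih =>
        have h2 := hmono t (ψ^[n + 1] t) ht.le ih
        calc t ≤ ψ t := hcon
          _ ≤ ψ (ψ^[n + 1] t) := h2
          _ = ψ^[n + 2] t := (Function.iterate_succ_apply' ψ (n + 1) t).symm
    have h0 := (hsum t ht).tendsto_atTop_zero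
    have : t ≤ 0 := ge_of_tendsto' h0 hge
    linarith
  obtain ⟨x0, hx0⟩ := hx0
  have hkey : ∀ u : X, ∃ v, g v = f u := fun u => hrange ⟨u, rfl⟩
  choose nxt hnxt using hkey
  set x : ℕ → X := fun n => nxt^[n] x0 with hxdef
  have hgx : ∀ n, g (x (n + 1)) = f (x n) := by
    intro n
    have h1 : x (n + 1) = nxt (x n) := Function.iterate_succ_apply' nxt n x0
    rw [h1, hnxt]
  have hx00 : x 0 = x0 := rfl
  have hchain : ∀ n, 1 ≤ α (g (x n)) (g (x (n + 1))) := by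
    intro n
    induction n with
    | zero => rw [hgx 0, hx00]; exact hx0
    | succ n ih =>
      have h1 := hadm _ _ ih
      rwa [← hgx n, ← hgx (n + 1)] at h1
  -- one-step contraction along the orbit
  have hstep : ∀ n, dist (g (x (n + 1))) (g (x (n + 2))) ≤
      ψ (dist (g (x n)) (g (x (n + 1)))) := by
    intro n
    have hM := hcontr (x n) (x (n + 1))
    rw [← hgx n, ← hgx (n + 1)] at hM
    set a := dist (g (x n)) (g (x (n + 1))) with ha
    set b := dist (g (x (n + 1))) (g (x (n + 2))) with hb
    set M := max a (max ((dist (g (x n)) (g (x (n + 1))) + dist (g (x (n + 1))) (g (x (n + 2)))) / 2)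
      ((dist (g (x n)) (g (x (n + 2))) + dist (g (x (n + 1))) (g (x (n + 1)))) / 2)) with hMdef
    have hbM : b ≤ ψ M := le_trans (le_mul_of_one_le_left dist_nonneg (hchain n)) hM
    have hMnn : 0 ≤ M := le_trans dist_nonneg (le_max_left _ _)
    have htri : dist (g (x n)) (g (x (n + 2))) ≤ a + b := dist_triangle _ (g (x (n + 1))) _
    have hab1 : a ≤ max a b := le_max_left _ _
    have hab2 : b ≤ max a b := le_max_right _ _
    have hMle : M ≤ max a b := by
      rw [hMdef]
      refine max_le hab1 (max_le ?_ ?_)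
      · rw [← ha, ← hb]; linarith
      · rw [dist_self]; linarith
    rcases le_or_gt b a with h | h
    · have hmax : max a b = a := max_eq_left h
      calc b ≤ ψ M := hbM
        _ ≤ ψ (max a b) := hmono M (max a b) hMnn hMle
        _ = ψ a := by rw [hmax]
    · have hbpos : 0 < b := lt_of_le_of_lt dist_nonneg h
      have hmax : max a b = b := max_eq_right h.le
      have : b ≤ ψ b := by
        calc b ≤ ψ M := hbM
          _ ≤ ψ (max a b) := hmono M (max a b) hMnn hMle
          _ = ψ b := by rw [hmax]
      have := hlt b hbpos
      linarith
  set D := dist (g (x 0)) (g (x 1)) with hD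
  have hd : ∀ n, dist (g (x n)) (g (x (n + 1))) ≤ ψ^[n] D := by
    intro n
    induction n with
    | zero => simp [hD]
    | succ n ih =>
      calc dist (g (x (n + 1))) (g (x (n + 2))) ≤ ψ (dist (g (x n)) (g (x (n + 1)))) := hstep n
        _ ≤ ψ (ψ^[n] D) := hmono _ _ dist_nonneg ih
        _ = ψ^[n + 1] D := (Function.iterate_succ_apply' ψ n D).symm
  rcases eq_or_lt_of_le (dist_nonneg : (0:ℝ) ≤ D) with hD0 | hDpos
  · -- D = 0 : x 0 is already a coincidence point
    refine ⟨x 0, ?_⟩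
    have h1 : g (x 0) = g (x 1) := by
      rw [← dist_eq_zero]; exact hD0.symm
    rw [← hgx 0, ← h1]
  · have hsummable : Summable (fun n : ℕ => ψ^[n] D) :=
      (summable_nat_add_iff 1).1 (hsum D hDpos)
    have hcauchy : CauchySeq (fun n => g (x n)) :=
      cauchySeq_of_dist_le_of_summable _ hd hsummable
    obtain ⟨y, hy⟩ := cauchySeq_tendsto_of_complete hcauchy
    have hyrng : y ∈ Set.range g :=
      hclosed.mem_of_tendsto hy (Eventually.of_forall fun n => ⟨x n, rfl⟩)
    obtain ⟨z, hz⟩ := hyrng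
    rw [← hz] at hy
    obtain ⟨φ, hφmono, hφα⟩ := hreg x z hchain hy
    by_contra hne
    push_neg at hne
    set ε := dist (g z) (f z) with hε
    have hεpos : 0 < ε := dist_pos.mpr fun h => hne z h.symm
    have h0 : Tendsto (fun n => dist (g (x n)) (g z)) atTop (𝓝 0) :=
      tendsto_iff_dist_tendsto_zero.1 hy
    have hφtend : Tendsto φ atTop atTop := hφmono.tendsto_atTop
    have hφtend1 : Tendsto (fun k => φ k + 1) atTop atTop :=
      tendsto_atTop_mono (fun k => Nat.le_succ (φ k)) hφtend
    have e1 : ∀ᶠ k in atTop, dist (g (x (φ k))) (g z) < ε / 4 :=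
      (h0.comp hφtend).eventually_lt_const (by linarith)
    have e2 : ∀ᶠ k in atTop, dist (g (x (φ k + 1))) (g z) < ε / 4 :=
      (h0.comp hφtend1).eventually_lt_const (by linarith)
    obtain ⟨k, hk1, hk2⟩ := (e1.and e2).exists
    set a := dist (g (x (φ k))) (g z) with haa
    set c := dist (g (x (φ k + 1))) (g z) with hcc
    have hM := hcontr (x (φ k)) z
    rw [← hgx (φ k)] at hM
    set M := max (dist (g (x (φ k))) (g z))
      (max ((dist (g (x (φ k))) (g (x (φ k + 1))) + dist (g z) (f z)) / 2)
        ((dist (g (x (φ k))) (f z) + dist (g z) (g (x (φ k + 1)))) / 2)) with hMdef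
    have hdle : dist (g (x (φ k + 1))) (f z) ≤ ψ M :=
      le_trans (le_mul_of_one_le_left dist_nonneg (hφα k)) hM
    have hMnn : 0 ≤ M := le_trans dist_nonneg (le_max_left _ _)
    have htri1 : dist (g (x (φ k))) (g (x (φ k + 1))) ≤ a + c := by
      calc dist (g (x (φ k))) (g (x (φ k + 1)))
          ≤ dist (g (x (φ k))) (g z) + dist (g z) (g (x (φ k + 1))) := dist_triangle _ _ _
        _ = a + c := by rw [dist_comm (g z)]
    have htri2 : dist (g (x (φ k))) (f z) ≤ a + ε := by
      calc dist (g (x (φ k))) (f z)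
          ≤ dist (g (x (φ k))) (g z) + dist (g z) (f z) := dist_triangle _ _ _
        _ = a + ε := rfl
    have hgzc : dist (g z) (g (x (φ k + 1))) = c := dist_comm _ _
    have hMle : M ≤ 3 * (ε / 4) := by
      rw [hMdef]
      refine max_le (by linarith) (max_le ?_ ?_)
      · rw [← hε]; linarith
      · rw [hgzc]; linarith
    have hψle : ψ M ≤ ψ (3 * (ε / 4)) := hmono M _ hMnn hMle
    have hψlt : ψ (3 * (ε / 4)) < 3 * (ε / 4) := hlt _ (by linarith)
    have hfinal : ε ≤ c + ψ M := by
      calc ε = dist (g z) (f z) := rfl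
        _ ≤ dist (g z) (g (x (φ k + 1))) + dist (g (x (φ k + 1))) (f z) := dist_triangle _ _ _
        _ ≤ c + ψ M := by rw [hgzc]; exact add_le_add_right hdle c
    linarith
end

section
/- Under the hypotheses of the coincidence point theorem for a generalized α-ψ contractive pair (f,g) on a complete metric space (X,d) with f(X) ⊆ g(X), g(X) closed, f α-admissible w.r.t. g, existence of x₀ with α(gx₀, fx₀) ≥ 1, and the subsequence regularity condition, assume additionally that: for all coincidence points u, v of f and g there exists w ∈ X such that α(gu, gw) ≥ 1 and α(gv, gw) ≥ 1, and that f and g commute at their coincidence points (fz = gz implies fgz = gfz). Then f and g have a unique common fixed point, i.e., there is a unique z with fz = gz = z. -/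
open Filter Topology

theorem unique_common_fixed_point_generalized_alpha_psi
    {X : Type*} [MetricSpace X] [CompleteSpace X]
    (f g : X → X) (hrange : Set.range f ⊆ Set.range g)
    (hclosed : IsClosed (Set.range g))
    (α : X → X → ℝ) (hα : ∀ x y, 0 ≤ α x y)
    (ψ : ℝ → ℝ)
    (hmono : ∀ s t : ℝ, 0 ≤ s → s ≤ t → ψ s ≤ ψ t)
    (hnonneg : ∀ t : ℝ, 0 ≤ t → 0 ≤ ψ t)
    (hsum : ∀ t : ℝ, 0 < t → Summable (fun n : ℕ => ψ^[n + 1] t))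
    (hcontr : ∀ x y : X, α (g x) (g y) * dist (f x) (f y) ≤
      ψ (max (dist (g x) (g y)) (max ((dist (g x) (f x) + dist (g y) (f y)) / 2)
        ((dist (g x) (f y) + dist (g y) (f x)) / 2))))
    (hadm : ∀ x y : X, 1 ≤ α (g x) (g y) → 1 ≤ α (f x) (f y))
    (hx0 : ∃ x0 : X, 1 ≤ α (g x0) (f x0))
    (hreg : ∀ (x : ℕ → X) (z : X), (∀ n, 1 ≤ α (g (x n)) (g (x (n + 1)))) →
      Tendsto (fun n => g (x n)) atTop (𝓝 (g z)) →
      ∃ φ : ℕ → ℕ, StrictMono φ ∧ ∀ k, 1 ≤ α (g (x (φ k))) (g z))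
    (hub : ∀ u v : X, f u = g u → f v = g v →
      ∃ w : X, 1 ≤ α (g u) (g w) ∧ 1 ≤ α (g v) (g w))
    (hcomm : ∀ z : X, f z = g z → f (g z) = g (f z)) :
    ∃! z : X, f z = z ∧ g z = z := by
  classical
  -- ψ t < t for t > 0
  have hψ_lt : ∀ t : ℝ, 0 < t → ψ t < t := by
    intro t ht
    by_contra hcon
    push_neg at hcon
    have hiter : ∀ n, t ≤ ψ^[n] t := by
      intro n
      induction n with
      | zero => simp
      | succ n ih =>
        rw [Function.iterate_succ_apply']
        exact hcon.trans (hmono t _ ht.le ih)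
    have htend := (hsum t ht).tendsto_atTop_zero
    have hle : t ≤ 0 := ge_of_tendsto htend (Eventually.of_forall fun n => hiter (n + 1))
    linarith
  have hψ0 : ψ 0 = 0 := by
    rcases (hnonneg 0 le_rfl).eq_or_lt with h | h
    · exact h.symm
    · have := lt_of_le_of_lt (hmono 0 (ψ 0) le_rfl (hnonneg 0 le_rfl)) (hψ_lt (ψ 0) h)
      exact absurd this (lt_irrefl _)
  have hψ_iter_nonneg : ∀ (n : ℕ) (t : ℝ), 0 ≤ t → 0 ≤ ψ^[n] t := by
    intro n
    induction n with
    | zero => intro t ht; simpa using ht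
    | succ n ih =>
      intro t ht
      rw [Function.iterate_succ_apply']
      exact hnonneg _ (ih t ht)
  have hψ_iter_zero : ∀ n : ℕ, ψ^[n] (0 : ℝ) = 0 := by
    intro n
    induction n with
    | zero => simp
    | succ n ih => rw [Function.iterate_succ_apply', ih, hψ0]
  have hψ_tendsto : ∀ t : ℝ, 0 ≤ t → Tendsto (fun n => ψ^[n] t) atTop (𝓝 0) := by
    intro t ht
    rcases ht.eq_or_lt with h | h
    · simp [← h, hψ_iter_zero]
    · have h1 := (hsum t h).tendsto_atTop_zero
      exact (tendsto_add_atTop_iff_nat 1).mp h1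
  have hψ_summable : ∀ t : ℝ, 0 ≤ t → Summable (fun n => ψ^[n] t) := by
    intro t ht
    rcases ht.eq_or_lt with h | h
    · simp [← h, hψ_iter_zero, summable_zero]
    · exact (summable_nat_add_iff 1).mp (hsum t h)
  -- contraction usable form
  have key : ∀ x y : X, 1 ≤ α (g x) (g y) → dist (f x) (f y) ≤
      ψ (max (dist (g x) (g y)) (max ((dist (g x) (f x) + dist (g y) (f y)) / 2)
        ((dist (g x) (f y) + dist (g y) (f x)) / 2))) := by
    intro x y h
    calc dist (f x) (f y) ≤ α (g x) (g y) * dist (f x) (f y) :=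
          le_mul_of_one_le_left dist_nonneg h
      _ ≤ _ := hcontr x y
  have step : ∀ a b : ℝ, 0 ≤ a → 0 ≤ b → b ≤ ψ (max a b) → b ≤ ψ a := by
    intro a b ha hb h
    rcases le_or_gt b a with hba | hab
    · rwa [max_eq_left hba] at h
    · rw [max_eq_right hab.le] at h
      rcases hb.eq_or_lt with h0 | h0
      · rw [← h0]; exact hnonneg a ha
      · exact absurd (h.trans_lt (hψ_lt b h0)) (lt_irrefl b)
  -- choice of "next point"
  have hnxt0 : ∀ x : X, ∃ y, g y = f x := fun x => hrange ⟨x, rfl⟩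
  choose nxt hnxt using hnxt0
  have hit : ∀ (w : X) (n : ℕ), f (nxt^[n] w) = g (nxt^[n + 1] w) := by
    intro w n
    rw [Function.iterate_succ_apply', hnxt]
  -- uniqueness of point of coincidence
  have poc : ∀ u v : X, f u = g u → f v = g v → g u = g v := by
    intro u v hfu hfv
    have main : ∀ (p w : X), f p = g p → 1 ≤ α (g p) (g w) →
        Tendsto (fun n => g (nxt^[n] w)) atTop (𝓝 (g p)) := by
      intro p w hfp haw
      have halpha : ∀ n, 1 ≤ α (g p) (g (nxt^[n] w)) := by
        intro n
        induction n with
        | zero => simpa using haw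
        | succ n ih =>
          rw [← hit w n]
          have h2 := hadm p (nxt^[n] w) ih
          rwa [hfp] at h2
      have hstep : ∀ n, dist (g p) (g (nxt^[n + 1] w)) ≤ ψ (dist (g p) (g (nxt^[n] w))) := by
        intro n
        apply step _ _ dist_nonneg dist_nonneg
        have hk := key p (nxt^[n] w) (halpha n)
        rw [hfp, hit w n] at hk
        refine hk.trans (hmono _ _ (le_max_of_le_left dist_nonneg) ?_)
        apply max_le (le_max_left _ _)
        apply max_le
        · have t1 : dist (g (nxt^[n] w)) (g (nxt^[n + 1] w)) ≤
              dist (g p) (g (nxt^[n] w)) + dist (g p) (g (nxt^[n + 1] w)) := by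
            calc dist (g (nxt^[n] w)) (g (nxt^[n + 1] w)) ≤
                dist (g (nxt^[n] w)) (g p) + dist (g p) (g (nxt^[n + 1] w)) :=
                  dist_triangle _ _ _
              _ = _ := by rw [dist_comm]
          simp only [dist_self, zero_add]
          have h2 := le_max_left (dist (g p) (g (nxt^[n] w))) (dist (g p) (g (nxt^[n + 1] w)))
          have h3 := le_max_right (dist (g p) (g (nxt^[n] w))) (dist (g p) (g (nxt^[n + 1] w)))
          linarith
        · rw [dist_comm (g (nxt^[n] w)) (g p)]
          have h2 := le_max_left (dist (g p) (g (nxt^[n] w))) (dist (g p) (g (nxt^[n + 1] w)))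
          have h3 := le_max_right (dist (g p) (g (nxt^[n] w))) (dist (g p) (g (nxt^[n + 1] w)))
          linarith
      have hbound : ∀ n, dist (g p) (g (nxt^[n] w)) ≤ ψ^[n] (dist (g p) (g (nxt^[0] w))) := by
        intro n
        induction n with
        | zero => simp
        | succ n ih =>
          rw [Function.iterate_succ_apply' ψ n]
          exact (hstep n).trans (hmono _ _ dist_nonneg ih)
      have h0 := hψ_tendsto _ (dist_nonneg (x := g p) (y := g (nxt^[0] w)))
      have hd0 : Tendsto (fun n => dist (g p) (g (nxt^[n] w))) atTop (𝓝 0) :=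
        squeeze_zero (fun n => dist_nonneg) hbound h0
      rw [tendsto_iff_dist_tendsto_zero]
      simpa [dist_comm] using hd0
    obtain ⟨w, hw1, hw2⟩ := hub u v hfu hfv
    exact tendsto_nhds_unique (main u w hfu hw1) (main v w hfv hw2)
  -- construction of a coincidence point
  obtain ⟨x0, hx0⟩ := hx0
  have halpha : ∀ n, 1 ≤ α (g (nxt^[n] x0)) (g (nxt^[n + 1] x0)) := by
    intro n
    induction n with
    | zero => simpa [hnxt] using hx0
    | succ n ih =>
      rw [← hit x0 n, ← hit x0 (n + 1)]
      exact hadm _ _ ih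
  have hstep : ∀ n, dist (g (nxt^[n + 1] x0)) (g (nxt^[n + 1 + 1] x0)) ≤
      ψ (dist (g (nxt^[n] x0)) (g (nxt^[n + 1] x0))) := by
    intro n
    apply step _ _ dist_nonneg dist_nonneg
    have hk := key (nxt^[n] x0) (nxt^[n + 1] x0) (halpha n)
    rw [hit x0 n, hit x0 (n + 1)] at hk
    refine hk.trans (hmono _ _ (le_max_of_le_left dist_nonneg) ?_)
    apply max_le (le_max_left _ _)
    apply max_le
    · have h2 := le_max_left (dist (g (nxt^[n] x0)) (g (nxt^[n + 1] x0)))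
        (dist (g (nxt^[n + 1] x0)) (g (nxt^[n + 1 + 1] x0)))
      have h3 := le_max_right (dist (g (nxt^[n] x0)) (g (nxt^[n + 1] x0)))
        (dist (g (nxt^[n + 1] x0)) (g (nxt^[n + 1 + 1] x0)))
      linarith
    · have t1 : dist (g (nxt^[n] x0)) (g (nxt^[n + 1 + 1] x0)) ≤
          dist (g (nxt^[n] x0)) (g (nxt^[n + 1] x0)) +
          dist (g (nxt^[n + 1] x0)) (g (nxt^[n + 1 + 1] x0)) := dist_triangle _ _ _
      simp only [dist_self, add_zero]
      have h2 := le_max_left (dist (g (nxt^[n] x0)) (g (nxt^[n + 1] x0)))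
        (dist (g (nxt^[n + 1] x0)) (g (nxt^[n + 1 + 1] x0)))
      have h3 := le_max_right (dist (g (nxt^[n] x0)) (g (nxt^[n + 1] x0)))
        (dist (g (nxt^[n + 1] x0)) (g (nxt^[n + 1 + 1] x0)))
      linarith
  have hbound : ∀ n, dist (g (nxt^[n] x0)) (g (nxt^[n + 1] x0)) ≤
      ψ^[n] (dist (g (nxt^[0] x0)) (g (nxt^[1] x0))) := by
    intro n
    induction n with
    | zero => simp
    | succ n ih =>
      rw [Function.iterate_succ_apply' ψ n]
      exact (hstep n).trans (hmono _ _ dist_nonneg ih)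
  have hcauchy : CauchySeq (fun n => g (nxt^[n] x0)) :=
    cauchySeq_of_dist_le_of_summable _ hbound (hψ_summable _ dist_nonneg)
  obtain ⟨L, hL⟩ := cauchySeq_tendsto_of_complete hcauchy
  have hLmem : L ∈ Set.range g :=
    hclosed.mem_of_tendsto hL (Eventually.of_forall fun n => ⟨nxt^[n] x0, rfl⟩)
  obtain ⟨z, hz⟩ := hLmem
  rw [← hz] at hL
  obtain ⟨φ, hφmono, hφα⟩ := hreg (fun n => nxt^[n] x0) z halpha hL
  -- z is a coincidence point
  have hcoincz : f z = g z := by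
    by_contra hne
    have hDpos : 0 < dist (g z) (f z) := dist_pos.mpr fun h => hne h.symm
    set D := dist (g z) (f z) with hD
    have hsub1 : Tendsto (fun k => g (nxt^[φ k] x0)) atTop (𝓝 (g z)) :=
      hL.comp hφmono.tendsto_atTop
    have hsub2 : Tendsto (fun k => g (nxt^[φ k + 1] x0)) atTop (𝓝 (g z)) := by
      have h1 : Tendsto (fun n => g (nxt^[n + 1] x0)) atTop (𝓝 (g z)) :=
        hL.comp (tendsto_add_atTop_nat 1)
      exact h1.comp hφmono.tendsto_atTop
    obtain ⟨N1, hN1⟩ := Metric.tendsto_atTop.mp hsub1 (D / 4) (by positivity)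
    obtain ⟨N2, hN2⟩ := Metric.tendsto_atTop.mp hsub2 (D / 4) (by positivity)
    set k := max N1 N2 with hk'
    have h1 : dist (g (nxt^[φ k] x0)) (g z) < D / 4 := hN1 k (le_max_left _ _)
    have h2 : dist (g (nxt^[φ k + 1] x0)) (g z) < D / 4 := hN2 k (le_max_right _ _)
    have hk := key (nxt^[φ k] x0) z (hφα k)
    rw [hit x0 (φ k)] at hk
    have hM : max (dist (g (nxt^[φ k] x0)) (g z))
        (max ((dist (g (nxt^[φ k] x0)) (g (nxt^[φ k + 1] x0)) + dist (g z) (f z)) / 2)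
          ((dist (g (nxt^[φ k] x0)) (f z) + dist (g z) (g (nxt^[φ k + 1] x0))) / 2)) ≤
        3 * D / 4 := by
      apply max_le (by linarith)
      apply max_le
      · have t1 : dist (g (nxt^[φ k] x0)) (g (nxt^[φ k + 1] x0)) ≤
            dist (g (nxt^[φ k] x0)) (g z) + dist (g z) (g (nxt^[φ k + 1] x0)) :=
          dist_triangle _ _ _
        rw [dist_comm (g z) (g (nxt^[φ k + 1] x0))] at t1
        linarith
      · have t1 : dist (g (nxt^[φ k] x0)) (f z) ≤
            dist (g (nxt^[φ k] x0)) (g z) + dist (g z) (f z) := dist_triangle _ _ _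
        rw [dist_comm (g z) (g (nxt^[φ k + 1] x0))]
        linarith
    have hfin : dist (g (nxt^[φ k + 1] x0)) (f z) ≤ ψ (3 * D / 4) :=
      hk.trans (hmono _ _ (le_max_of_le_left dist_nonneg) hM)
    have hψD : ψ (3 * D / 4) < 3 * D / 4 := hψ_lt _ (by positivity)
    have ht : D ≤ dist (g z) (g (nxt^[φ k + 1] x0)) + dist (g (nxt^[φ k + 1] x0)) (f z) :=
      dist_triangle _ _ _
    rw [dist_comm (g z) (g (nxt^[φ k + 1] x0))] at ht
    linarith
  -- build the common fixed point
  set t := g z with htdef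
  have hft : f t = g t := by
    have h1 := hcomm z hcoincz
    rw [hcoincz] at h1
    exact h1
  have hgt : g t = t := by
    have := poc z t hcoincz hft
    rw [← this]
  have hftt : f t = t := hft.trans hgt
  refine ⟨t, ⟨hftt, hgt⟩, ?_⟩
  rintro y ⟨hfy, hgy⟩
  have hy : f y = g y := hfy.trans hgy.symm
  have := poc y t hy hft
  rw [hgy, hgt] at this
  exact this
end

section
/- Under the hypotheses of the common fixed point theorem for a generalized α-ψ contractive pair (f,g), any two coincidence points u, v of f and g satisfy gu = gv. -/
open Filter Topology

theorem coincidence_values_equal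
    {X : Type*} [MetricSpace X] [CompleteSpace X]
    (f g : X → X) (hrange : Set.range f ⊆ Set.range g)
    (hclosed : IsClosed (Set.range g))
    (α : X → X → ℝ) (hα : ∀ x y, 0 ≤ α x y)
    (ψ : ℝ → ℝ)
    (hmono : ∀ s t : ℝ, 0 ≤ s → s ≤ t → ψ s ≤ ψ t)
    (hnonneg : ∀ t : ℝ, 0 ≤ t → 0 ≤ ψ t)
    (hsum : ∀ t : ℝ, 0 < t → Summable (fun n : ℕ => ψ^[n + 1] t))
    (hcontr : ∀ x y : X, α (g x) (g y) * dist (f x) (f y) ≤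
      ψ (max (dist (g x) (g y)) (max ((dist (g x) (f x) + dist (g y) (f y)) / 2)
        ((dist (g x) (f y) + dist (g y) (f x)) / 2))))
    (hadm : ∀ x y : X, 1 ≤ α (g x) (g y) → 1 ≤ α (f x) (f y))
    (hub : ∀ u v : X, f u = g u → f v = g v →
      ∃ w : X, 1 ≤ α (g u) (g w) ∧ 1 ≤ α (g v) (g w)) :
    ∀ u v : X, f u = g u → f v = g v → g u = g v := by
  -- ψ t ≤ t for nonnegative t
  have psi_lt : ∀ t : ℝ, 0 < t → ψ t ≤ t := by
    intro t ht
    by_contra h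
    push_neg at h
    have iter : ∀ n, t ≤ ψ^[n] t := by
      intro n
      induction n with
      | zero => simp
      | succ n ih =>
        rw [Function.iterate_succ_apply']
        exact le_trans h.le (hmono t (ψ^[n] t) ht.le ih)
    have hz := (hsum t ht).tendsto_atTop_zero
    have := (tendsto_order.mp hz).2 t ht
    rcases this.exists with ⟨n, hn⟩
    exact absurd hn (not_lt.mpr (iter (n + 1)))
  have psi_le : ∀ t : ℝ, 0 ≤ t → ψ t ≤ t := by
    intro t ht
    rcases eq_or_lt_of_le ht with h | h
    · -- t = 0
      subst h
      by_contra h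
      push_neg at h
      have h1 := hmono 0 (ψ 0 / 2) le_rfl (by linarith)
      have h2 := psi_lt (ψ 0 / 2) (by linarith)
      linarith
    · exact psi_lt t h
  have psi_zero : ψ 0 = 0 := le_antisymm (psi_le 0 le_rfl) (hnonneg 0 le_rfl)
  have psi_iter_zero : ∀ n, ψ^[n] (0 : ℝ) = 0 := by
    intro n
    induction n with
    | zero => simp
    | succ n ih => rw [Function.iterate_succ_apply', ih, psi_zero]
  intro u v hu hv
  obtain ⟨w0, hu0, hv0⟩ := hub u v hu hv
  -- the Picard sequence starting from w0
  have hnext : ∀ x : X, ∃ z : X, g z = f x := by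
    intro x
    exact hrange (Set.mem_range_self x)
  set next : X → X := fun x => (hnext x).choose with hnextdef
  have hnexts : ∀ x, g (next x) = f x := fun x => (hnext x).choose_spec
  set w : ℕ → X := fun n => next^[n] w0 with hwdef
  have hw0 : w 0 = w0 := rfl
  have hwsucc : ∀ n, w (n + 1) = next (w n) := by
    intro n; simp [hwdef, Function.iterate_succ_apply']
  -- the key convergence claim for any coincidence point linked to w0
  have key : ∀ u' : X, f u' = g u' → 1 ≤ α (g u') (g w0) →
      Tendsto (fun n => dist (g u') (g (w n))) atTop (𝓝 0) := by
    intro u' hu' h0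
    have hαn : ∀ n, 1 ≤ α (g u') (g (w n)) := by
      intro n
      induction n with
      | zero => exact h0
      | succ n ih =>
        have h := hadm u' (w n) ih
        rw [hu'] at h
        rw [hwsucc, hnexts]
        exact h
    set d : ℕ → ℝ := fun n => dist (g u') (g (w n)) with hddef
    have hdnonneg : ∀ n, 0 ≤ d n := fun n => dist_nonneg
    have step : ∀ n, d (n + 1) ≤ ψ (d n) := by
      intro n
      have hc := hcontr u' (w n)
      have hfw : f (w n) = g (w (n + 1)) := by rw [hwsucc, hnexts]
      rw [hu', hfw] at hc
      set M : ℝ := max (dist (g u') (g (w n)))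
        (max ((dist (g u') (g u') + dist (g (w n)) (g (w (n + 1)))) / 2)
          ((dist (g u') (g (w (n + 1))) + dist (g (w n)) (g u')) / 2)) with hMdef
      have hM0 : 0 ≤ M := le_trans dist_nonneg (le_max_left _ _)
      have hd1 : d (n + 1) ≤ ψ M := by
        have h1 : d (n + 1) ≤ α (g u') (g (w n)) * dist (g u') (g (w (n + 1))) :=
          le_mul_of_one_le_left dist_nonneg (hαn n)
        exact le_trans h1 hc
      have hMle : M ≤ max (d n) ((d n + d (n + 1)) / 2) := by
        apply max_le
        · exact le_max_left _ _
        apply max_le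
        · have : dist (g (w n)) (g (w (n + 1))) ≤ d n + d (n + 1) := by
            calc dist (g (w n)) (g (w (n + 1))) ≤
                dist (g (w n)) (g u') + dist (g u') (g (w (n + 1))) := dist_triangle _ _ _
              _ = d n + d (n + 1) := by rw [dist_comm]
          apply le_trans _ (le_max_right _ _)
          simp only [dist_self]
          linarith
        · apply le_trans _ (le_max_right _ _)
          have : dist (g (w n)) (g u') = d n := dist_comm _ _
          rw [this]
          linarith
      have hdle : d (n + 1) ≤ max (d n) ((d n + d (n + 1)) / 2) :=
        le_trans hd1 (le_trans (psi_le M hM0) hMle)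
      have hmonot : d (n + 1) ≤ d n := by
        rcases le_total ((d n + d (n + 1)) / 2) (d n) with h | h
        · rw [max_eq_left h] at hdle; exact hdle
        · rw [max_eq_right h] at hdle; linarith
      have hMd : M ≤ d n := le_trans hMle (by apply max_le le_rfl; linarith)
      exact le_trans hd1 (hmono M (d n) hM0 hMd)
    have hiter : ∀ n, d n ≤ ψ^[n] (d 0) := by
      intro n
      induction n with
      | zero => simp
      | succ n ih =>
        rw [Function.iterate_succ_apply']
        exact le_trans (step n) (hmono (d n) (ψ^[n] (d 0)) (hdnonneg n) ih)
    have hb : Tendsto (fun n => ψ^[n] (d 0)) atTop (𝓝 0) := by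
      rcases eq_or_lt_of_le (hdnonneg 0) with h | h
      · have : ∀ n, ψ^[n] (d 0) = 0 := by
          intro n; rw [← h, psi_iter_zero]
        simp only [this]; exact tendsto_const_nhds
      · have hz := (hsum (d 0) h).tendsto_atTop_zero
        exact (tendsto_add_atTop_iff_nat 1).mp hz
    exact squeeze_zero hdnonneg hiter hb
  have hdu := key u hu hu0
  have hdv := key v hv hv0
  have hsumt : Tendsto (fun n => dist (g u) (g (w n)) + dist (g v) (g (w n))) atTop (𝓝 0) := by
    simpa using hdu.add hdv
  have hle : dist (g u) (g v) ≤ 0 := by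
    apply ge_of_tendsto hsumt
    filter_upwards with n
    calc dist (g u) (g v) ≤ dist (g u) (g (w n)) + dist (g (w n)) (g v) := dist_triangle _ _ _
      _ = dist (g u) (g (w n)) + dist (g v) (g (w n)) := by rw [dist_comm (g (w n))]
  exact dist_le_zero.mp hle
end

section
/- Let (X,⪯) be a partially ordered set with a complete metric d, and f, g : X → X with f(X) ⊆ g(X), g(X) closed, and f g-nondecreasing (gx ⪯ gy implies fx ⪯ fy). Suppose there is a (c)-comparison function ψ with d(fx,fy) ≤ ψ(M(gx,gy)) for all x,y with gx ⪯ gy, where M(gx,gy) = max{d(gx,gy), (d(gx,fx)+d(gy,fy))/2, (d(gx,fy)+d(gy,fx))/2}. Assume (i) there exists x₀ with gx₀ ⪯ fx₀; (ii) (X,⪯,d) is g-regular: every nondecreasing sequence {gxₙ} converging to some gz has a subsequence {gx_{n(k)}} with gx_{n(k)} ⪯ gz for all k. Then f and g have a coincidence point. Moreover, if for every pair of coincidence points x, y there is z with gx ⪯ gz and gy ⪯ gz, and f, g commute at coincidence points, then f and g have a unique common fixed point. -/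
open Filter Topology

variable {ψ : ℝ → ℝ}

lemma aux_psi_lt (hmono : ∀ s t : ℝ, 0 ≤ s → s ≤ t → ψ s ≤ ψ t)
    (hsum : ∀ t : ℝ, 0 < t → Summable (fun n : ℕ => ψ^[n + 1] t)) :
    ∀ t : ℝ, 0 < t → ψ t < t := by
  intro t ht
  by_contra h
  push_neg at h
  have hiter : ∀ n, t ≤ ψ^[n] t := by
    intro n
    induction n with
    | zero => simp
    | succ n ih =>
      rw [Function.iterate_succ_apply']
      exact le_trans h (hmono t _ ht.le ih)
  have h0 := (hsum t ht).tendsto_atTop_zero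
  obtain ⟨n, hn⟩ := (h0.eventually_lt_const ht).exists
  exact absurd (hiter (n + 1)) (by simpa using not_le.mpr hn)

lemma aux_psi_zero (hmono : ∀ s t : ℝ, 0 ≤ s → s ≤ t → ψ s ≤ ψ t)
    (hnonneg : ∀ t : ℝ, 0 ≤ t → 0 ≤ ψ t)
    (hsum : ∀ t : ℝ, 0 < t → Summable (fun n : ℕ => ψ^[n + 1] t)) :
    ψ 0 = 0 := by
  refine le_antisymm ?_ (hnonneg 0 le_rfl)
  by_contra h
  push_neg at h
  have h1 := aux_psi_lt hmono hsum (ψ 0) h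
  have h2 := hmono 0 (ψ 0) le_rfl h.le
  linarith

lemma aux_iter_tendsto (hmono : ∀ s t : ℝ, 0 ≤ s → s ≤ t → ψ s ≤ ψ t)
    (hnonneg : ∀ t : ℝ, 0 ≤ t → 0 ≤ ψ t)
    (hsum : ∀ t : ℝ, 0 < t → Summable (fun n : ℕ => ψ^[n + 1] t)) :
    ∀ t : ℝ, 0 ≤ t → Tendsto (fun n : ℕ => ψ^[n] t) atTop (𝓝 0) := by
  intro t ht
  rcases ht.eq_or_lt with h | h
  · have hz : ∀ n : ℕ, ψ^[n] t = 0 := by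
      intro n
      rw [← h, Function.iterate_fixed (aux_psi_zero hmono hnonneg hsum)]
    simpa [hz] using tendsto_const_nhds (α := ℝ) (f := atTop (α := ℕ))
  · exact (tendsto_add_atTop_iff_nat 1).mp (hsum t h).tendsto_atTop_zero

lemma aux_step (hmono : ∀ s t : ℝ, 0 ≤ s → s ≤ t → ψ s ≤ ψ t)
    (hsum : ∀ t : ℝ, 0 < t → Summable (fun n : ℕ => ψ^[n + 1] t))
    {s t M : ℝ} (hs : 0 ≤ s) (hM : 0 ≤ M)
    (hMle : M ≤ max s ((s + t) / 2)) (h : t ≤ ψ M) : t ≤ ψ s := by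
  rcases le_or_gt t s with h1 | h1
  · have hmax : max s ((s + t) / 2) = s := max_eq_left (by linarith)
    exact h.trans (hmono M s hM (hmax ▸ hMle))
  · have ht' : 0 < t := lt_of_le_of_lt hs h1
    have h2 : max s ((s + t) / 2) ≤ t := max_le h1.le (by linarith)
    have h3 : ψ M ≤ ψ t := hmono M t hM (hMle.trans h2)
    have h4 := aux_psi_lt hmono hsum t ht'
    linarith

lemma aux_seq_tendsto (hmono : ∀ s t : ℝ, 0 ≤ s → s ≤ t → ψ s ≤ ψ t)
    (hnonneg : ∀ t : ℝ, 0 ≤ t → 0 ≤ ψ t)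
    (hsum : ∀ t : ℝ, 0 < t → Summable (fun n : ℕ => ψ^[n + 1] t))
    (e : ℕ → ℝ) (he0 : ∀ n, 0 ≤ e n) (hstep : ∀ n, e (n + 1) ≤ ψ (e n)) :
    Tendsto e atTop (𝓝 0) := by
  have hb : ∀ n, e n ≤ ψ^[n] (e 0) := by
    intro n
    induction n with
    | zero => simp
    | succ n ih =>
      rw [Function.iterate_succ_apply']
      exact (hstep n).trans (hmono _ _ (he0 n) ih)
  exact squeeze_zero he0 hb (aux_iter_tendsto hmono hnonneg hsum (e 0) (he0 0))

theorem ordered_coincidence_common_fixed_point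
    {X : Type*} [PartialOrder X] [MetricSpace X] [CompleteSpace X]
    (f g : X → X) (hrange : Set.range f ⊆ Set.range g)
    (hclosed : IsClosed (Set.range g))
    (hmonof : ∀ x y : X, g x ≤ g y → f x ≤ f y)
    (ψ : ℝ → ℝ)
    (hmono : ∀ s t : ℝ, 0 ≤ s → s ≤ t → ψ s ≤ ψ t)
    (hnonneg : ∀ t : ℝ, 0 ≤ t → 0 ≤ ψ t)
    (hsum : ∀ t : ℝ, 0 < t → Summable (fun n : ℕ => ψ^[n + 1] t))
    (hcontr : ∀ x y : X, g x ≤ g y → dist (f x) (f y) ≤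
      ψ (max (dist (g x) (g y)) (max ((dist (g x) (f x) + dist (g y) (f y)) / 2)
        ((dist (g x) (f y) + dist (g y) (f x)) / 2))))
    (hx0 : ∃ x0 : X, g x0 ≤ f x0)
    (hreg : ∀ (x : ℕ → X) (z : X), (∀ n, g (x n) ≤ g (x (n + 1))) →
      Tendsto (fun n => g (x n)) atTop (𝓝 (g z)) →
      ∃ φ : ℕ → ℕ, StrictMono φ ∧ ∀ k, g (x (φ k)) ≤ g z) :
    (∃ z : X, f z = g z) ∧
      ((∀ u v : X, f u = g u → f v = g v → ∃ w : X, g u ≤ g w ∧ g v ≤ g w) →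
        (∀ z : X, f z = g z → f (g z) = g (f z)) →
          ∃! z : X, f z = z ∧ g z = z) := by
  obtain ⟨x0, hx0⟩ := hx0
  have hF : ∀ a : X, ∃ b, g b = f a := fun a => hrange ⟨a, rfl⟩
  choose F hgF using hF
  have hit : ∀ (a : X) (n : ℕ), g (F^[n + 1] a) = f (F^[n] a) := by
    intro a n
    rw [Function.iterate_succ_apply']
    exact hgF _
  -- consecutive-step contraction
  have key1 : ∀ a b : X, g a ≤ g b → g b = f a →
      dist (f a) (f b) ≤ ψ (dist (g a) (g b)) := by
    intro a b hab hb
    have hC := hcontr a b hab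
    refine aux_step hmono hsum dist_nonneg (le_max_of_le_left dist_nonneg) ?_ hC
    have e1 : dist (g a) (f a) = dist (g a) (g b) := by rw [hb]
    have e2 : dist (g b) (f b) = dist (f a) (f b) := by rw [hb]
    have e3 : dist (g b) (f a) = 0 := by rw [hb, dist_self]
    have e4 : dist (g a) (f b) ≤ dist (g a) (g b) + dist (f a) (f b) := by
      calc dist (g a) (f b) ≤ dist (g a) (g b) + dist (g b) (f b) := dist_triangle _ _ _
        _ = dist (g a) (g b) + dist (f a) (f b) := by rw [e2]
    refine max_le (le_max_left _ _) (max_le ?_ ?_)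
    · rw [e1, e2]; exact le_max_right _ _
    · rw [e3]
      refine le_trans ?_ (le_max_right _ _)
      linarith
  -- contraction towards a coincidence point
  have key2 : ∀ u b : X, f u = g u → g u ≤ g b →
      dist (g u) (f b) ≤ ψ (dist (g u) (g b)) := by
    intro u b hu hub
    have hC := hcontr u b hub
    rw [hu] at hC
    refine aux_step hmono hsum dist_nonneg (le_max_of_le_left dist_nonneg) ?_ hC
    have e1 : dist (g u) (f u) = 0 := by rw [hu, dist_self]
    have e2 : dist (g b) (f b) ≤ dist (g u) (g b) + dist (g u) (f b) := by
      calc dist (g b) (f b) ≤ dist (g b) (g u) + dist (g u) (f b) := dist_triangle _ _ _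
        _ = dist (g u) (g b) + dist (g u) (f b) := by rw [dist_comm]
    have e3 : dist (g b) (f u) = dist (g u) (g b) := by rw [hu, dist_comm]
    refine max_le (le_max_left _ _) (max_le ?_ ?_)
    · refine le_trans ?_ (le_max_right _ _)
      rw [dist_self]
      linarith
    · refine le_trans ?_ (le_max_right _ _)
      rw [dist_comm (g b) (g u)]
      linarith
  -- the Picard sequence
  set x : ℕ → X := fun n => F^[n] x0 with hxdef
  have hgx : ∀ n, g (x (n + 1)) = f (x n) := fun n => hit x0 n
  have hx00 : x 0 = x0 := rfl
  have hmonoseq : ∀ n, g (x n) ≤ g (x (n + 1)) := by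
    intro n
    induction n with
    | zero => rw [hgx 0, hx00]; exact hx0
    | succ n ih =>
      rw [hgx (n + 1), hgx n]
      exact hmonof _ _ ih
  have hco : ∃ z : X, f z = g z := by
    by_cases hex : ∃ n, f (x n) = g (x n)
    · obtain ⟨n, hn⟩ := hex
      exact ⟨x n, hn⟩
    push_neg at hex
    have hd0 : 0 < dist (g (x 0)) (g (x 1)) := by
      rw [hgx 0]
      exact dist_pos.mpr fun h => hex 0 h.symm
    have hdstep : ∀ n, dist (g (x n)) (g (x (n + 1))) ≤ ψ^[n] (dist (g (x 0)) (g (x 1))) := by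
      intro n
      induction n with
      | zero => simp
      | succ n ih =>
        rw [Function.iterate_succ_apply']
        calc dist (g (x (n + 1))) (g (x (n + 2)))
            = dist (f (x n)) (f (x (n + 1))) := by rw [hgx n, hgx (n + 1)]
          _ ≤ ψ (dist (g (x n)) (g (x (n + 1)))) := key1 _ _ (hmonoseq n) (hgx n)
          _ ≤ _ := hmono _ _ dist_nonneg ih
    have hcauchy : CauchySeq (fun n => g (x n)) :=
      cauchySeq_of_dist_le_of_summable _ hdstep ((summable_nat_add_iff 1).mp (hsum _ hd0))
    obtain ⟨l, hl⟩ := cauchySeq_tendsto_of_complete hcauchy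
    obtain ⟨z, hz⟩ := hclosed.mem_of_tendsto hl (Eventually.of_forall fun n => ⟨x n, rfl⟩)
    rw [← hz] at hl
    obtain ⟨φ, hφ, hφle⟩ := hreg x z hmonoseq hl
    refine ⟨z, ?_⟩
    by_contra hne
    have hDpos : 0 < dist (g z) (f z) := dist_pos.mpr fun h => hne h.symm
    set D := dist (g z) (f z) with hD
    have hψD := aux_psi_lt hmono hsum D hDpos
    set δ := min (D / 2) (D - ψ D) with hδdef
    have hδpos : 0 < δ := lt_min (by linarith) (by linarith)
    have hδ1 : δ ≤ D / 2 := min_le_left _ _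
    have hδ2 : δ ≤ D - ψ D := min_le_right _ _
    have hsub : Tendsto (fun k => g (x (φ k))) atTop (𝓝 (g z)) := hl.comp hφ.tendsto_atTop
    have hsub2 : Tendsto (fun k => f (x (φ k))) atTop (𝓝 (g z)) := by
      have h1 : Tendsto (fun n => g (x (n + 1))) atTop (𝓝 (g z)) :=
        (tendsto_add_atTop_iff_nat 1).mpr hl
      have h2 : Tendsto (fun n => f (x n)) atTop (𝓝 (g z)) := by
        simpa [hgx] using h1
      exact h2.comp hφ.tendsto_atTop
    obtain ⟨N1, hN1⟩ := Metric.tendsto_atTop.mp hsub δ hδpos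
    obtain ⟨N2, hN2⟩ := Metric.tendsto_atTop.mp hsub2 δ hδpos
    set k := max N1 N2 with hkdef
    have ha : dist (g (x (φ k))) (g z) < δ := hN1 k (le_max_left _ _)
    have hc : dist (g z) (f (x (φ k))) < δ := by
      rw [dist_comm]; exact hN2 k (le_max_right _ _)
    have hb : dist (g (x (φ k))) (f (x (φ k))) < 2 * δ := by
      calc dist (g (x (φ k))) (f (x (φ k)))
          ≤ dist (g (x (φ k))) (g z) + dist (g z) (f (x (φ k))) := dist_triangle _ _ _
        _ < 2 * δ := by linarith
    have hC := hcontr (x (φ k)) z (hφle k)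
    have e4 : dist (g (x (φ k))) (f z) ≤ dist (g (x (φ k))) (g z) + D := dist_triangle _ _ _
    have hMle : max (dist (g (x (φ k))) (g z))
        (max ((dist (g (x (φ k))) (f (x (φ k))) + dist (g z) (f z)) / 2)
          ((dist (g (x (φ k))) (f z) + dist (g z) (f (x (φ k)))) / 2)) ≤ D := by
      refine max_le (by linarith) (max_le ?_ ?_)
      · rw [← hD]; linarith
      · linarith
    have hfin : dist (f (x (φ k))) (f z) ≤ ψ D :=
      hC.trans (hmono _ _ (le_max_of_le_left dist_nonneg) hMle)
    have htri : D ≤ dist (g z) (f (x (φ k))) + dist (f (x (φ k))) (f z) := dist_triangle _ _ _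
    linarith
  refine ⟨hco, fun hcomp hcommute => ?_⟩
  obtain ⟨z, hz⟩ := hco
  have hguv : ∀ u v : X, f u = g u → f v = g v → g u = g v := by
    intro u v hu hv
    obtain ⟨w, hw1, hw2⟩ := hcomp u v hu hv
    have main : ∀ u : X, f u = g u → g u ≤ g w →
        Tendsto (fun n => g (F^[n] w)) atTop (𝓝 (g u)) := by
      intro u hu hle
      have hled : ∀ n, g u ≤ g (F^[n] w) := by
        intro n
        induction n with
        | zero => simpa using hle
        | succ n ih =>
          rw [hit w n]
          calc g u = f u := hu.symm
            _ ≤ f (F^[n] w) := hmonof _ _ ih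
      have hest : ∀ n, dist (g u) (g (F^[n + 1] w)) ≤ ψ (dist (g u) (g (F^[n] w))) := by
        intro n
        rw [hit w n]
        exact key2 u _ hu (hled n)
      have htend := aux_seq_tendsto hmono hnonneg hsum (fun n => dist (g u) (g (F^[n] w)))
        (fun n => dist_nonneg) hest
      rw [tendsto_iff_dist_tendsto_zero]
      simpa [dist_comm] using htend
    exact tendsto_nhds_unique (main u hu hw1) (main v hv hw2)
  have hfp : f (g z) = g (g z) := by
    calc f (g z) = g (f z) := hcommute z hz
      _ = g (g z) := by rw [hz]
  have hgp : g (g z) = g z := hguv (g z) z hfp hz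
  refine ⟨g z, ⟨by rw [hfp, hgp], hgp⟩, ?_⟩
  rintro q ⟨hfq, hgq⟩
  have hq : f q = g q := by rw [hfq, hgq]
  have := hguv q (g z) hq hfp
  rw [hgq, hgp] at this
  exact this
end

section
/- Let (X,⪯) be a partially ordered set with complete metric d, f, g : X → X with f(X) ⊆ g(X), g(X) closed, f g-nondecreasing. Suppose there exists λ ∈ (0,1) with d(fx,fy) ≤ λ·d(gx,gy) for all x,y with gx ⪯ gy, there exists x₀ with gx₀ ⪯ fx₀, and (X,⪯,d) is g-regular. Then f and g have a coincidence point. If additionally every pair of coincidence points has a common ⪯-upper bound under g and f, g commute at coincidence points, the common fixed point exists and is unique. -/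
open Filter Topology

theorem ordered_coincidence_common_fixed_point_banach
    {X : Type*} [PartialOrder X] [MetricSpace X] [CompleteSpace X]
    (f g : X → X) (hrange : Set.range f ⊆ Set.range g)
    (hclosed : IsClosed (Set.range g))
    (hmonof : ∀ x y : X, g x ≤ g y → f x ≤ f y)
    (lam : ℝ) (hlam0 : 0 < lam) (hlam1 : lam < 1)
    (hcontr : ∀ x y : X, g x ≤ g y → dist (f x) (f y) ≤ lam * dist (g x) (g y))
    (hx0 : ∃ x0 : X, g x0 ≤ f x0)
    (hreg : ∀ (x : ℕ → X) (z : X), (∀ n, g (x n) ≤ g (x (n + 1))) →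
      Tendsto (fun n => g (x n)) atTop (𝓝 (g z)) →
      ∃ φ : ℕ → ℕ, StrictMono φ ∧ ∀ k, g (x (φ k)) ≤ g z) :
    (∃ z : X, f z = g z) ∧
      ((∀ u v : X, f u = g u → f v = g v → ∃ w : X, g u ≤ g w ∧ g v ≤ g w) →
        (∀ z : X, f z = g z → f (g z) = g (f z)) →
          ∃! z : X, f z = z ∧ g z = z) := by
  -- a "section" s of g over f : g (s x) = f x
  obtain ⟨s, hs⟩ : ∃ s : X → X, ∀ x, g (s x) = f x :=
    ⟨fun x => (hrange ⟨x, rfl⟩).choose, fun x => (hrange ⟨x, rfl⟩).choose_spec⟩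
  -- key lemma: two coincidence points with a common upper bound have equal g-value
  have key : ∀ u v w : X, f u = g u → f v = g v → g u ≤ g w → g v ≤ g w → g u = g v := by
    intro u v w hu hv huw hvw
    set wseq : ℕ → X := fun n => s^[n] w with hwseq
    have hwsucc : ∀ n, wseq (n + 1) = s (wseq n) := fun n => Function.iterate_succ_apply' s n w
    have hwgf : ∀ n, g (wseq (n + 1)) = f (wseq n) := fun n => by rw [hwsucc, hs]
    have hub : ∀ (u : X), f u = g u → g u ≤ g w → ∀ n, g u ≤ g (wseq n) := by
      intro u hu huw n
      induction n with
      | zero => exact huw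
      | succ n ih =>
        have := hmonof u (wseq n) ih
        rw [hwgf n, ← hu]
        exact this
    have hlim : ∀ (u : X), f u = g u → g u ≤ g w → Tendsto (fun n => g (wseq n)) atTop (𝓝 (g u)) := by
      intro u hu huw
      have hd : ∀ n, dist (g u) (g (wseq n)) ≤ dist (g u) (g (wseq 0)) * lam ^ n := by
        intro n
        induction n with
        | zero => simp
        | succ n ih =>
          have h1 : dist (g u) (g (wseq (n + 1))) ≤ lam * dist (g u) (g (wseq n)) := by
            have e : dist (g u) (g (wseq (n + 1))) = dist (f u) (f (wseq n)) := by
              rw [hu, hwgf n]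
            rw [e]
            exact hcontr u (wseq n) (hub u hu huw n)
          calc dist (g u) (g (wseq (n + 1))) ≤ lam * dist (g u) (g (wseq n)) := h1
            _ ≤ lam * (dist (g u) (g (wseq 0)) * lam ^ n) :=
                mul_le_mul_of_nonneg_left ih hlam0.le
            _ = dist (g u) (g (wseq 0)) * lam ^ (n + 1) := by ring
      rw [tendsto_iff_dist_tendsto_zero]
      have hb : Tendsto (fun n => dist (g u) (g (wseq 0)) * lam ^ n) atTop (𝓝 0) := by
        have := tendsto_pow_atTop_nhds_zero_of_lt_one hlam0.le hlam1
        simpa using this.const_mul (dist (g u) (g (wseq 0)))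
      refine squeeze_zero (fun n => dist_nonneg) (fun n => ?_) hb
      rw [dist_comm]; exact hd n
    exact tendsto_nhds_unique (hlim u hu huw) (hlim v hv hvw)
  -- construct the iteration sequence from x0
  obtain ⟨x0, hx0⟩ := hx0
  set x : ℕ → X := fun n => s^[n] x0 with hx
  have hxsucc : ∀ n, x (n + 1) = s (x n) := fun n => Function.iterate_succ_apply' s n x0
  have hgf : ∀ n, g (x (n + 1)) = f (x n) := fun n => by rw [hxsucc, hs]
  have hchain : ∀ n, g (x n) ≤ g (x (n + 1)) := by
    intro n
    induction n with
    | zero => rw [hgf]; exact hx0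
    | succ n ih =>
      have := hmonof (x n) (x (n + 1)) ih
      rw [hgf n, hgf (n + 1)]
      exact this
  have hdist : ∀ n, dist (g (x n)) (g (x (n + 1))) ≤ dist (g (x 0)) (g (x 1)) * lam ^ n := by
    intro n
    induction n with
    | zero => simp
    | succ n ih =>
      have h1 : dist (g (x (n + 1))) (g (x (n + 2))) ≤ lam * dist (g (x n)) (g (x (n + 1))) := by
        have e : dist (g (x (n + 1))) (g (x (n + 2))) = dist (f (x n)) (f (x (n + 1))) := by
          rw [hgf n, hgf (n + 1)]
        rw [e]
        exact hcontr (x n) (x (n + 1)) (hchain n)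
      calc dist (g (x (n + 1))) (g (x (n + 2))) ≤ lam * dist (g (x n)) (g (x (n + 1))) := h1
        _ ≤ lam * (dist (g (x 0)) (g (x 1)) * lam ^ n) := mul_le_mul_of_nonneg_left ih hlam0.le
        _ = dist (g (x 0)) (g (x 1)) * lam ^ (n + 1) := by ring
  have hcauchy : CauchySeq (fun n => g (x n)) :=
    cauchySeq_of_le_geometric lam (dist (g (x 0)) (g (x 1))) hlam1 hdist
  obtain ⟨p, hp⟩ := cauchySeq_tendsto_of_complete hcauchy
  obtain ⟨z, hz⟩ : p ∈ Set.range g :=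
    hclosed.mem_of_tendsto hp (Filter.Eventually.of_forall fun n => ⟨x n, rfl⟩)
  rw [← hz] at hp
  obtain ⟨φ, hφ, hφle⟩ := hreg x z hchain hp
  -- f (x (φ k)) tends to g z
  have h1 : Tendsto (fun k => f (x (φ k))) atTop (𝓝 (g z)) := by
    have hcomp : Tendsto (fun k => φ k + 1) atTop atTop :=
      (tendsto_add_atTop_nat 1).comp hφ.tendsto_atTop
    have := hp.comp hcomp
    have heq : ((fun n => g (x n)) ∘ fun k => φ k + 1) = fun k => f (x (φ k)) :=
      funext fun k => hgf (φ k)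
    rwa [heq] at this
  -- f (x (φ k)) tends to f z
  have h2 : Tendsto (fun k => f (x (φ k))) atTop (𝓝 (f z)) := by
    rw [tendsto_iff_dist_tendsto_zero]
    have hb : Tendsto (fun k => lam * dist (g (x (φ k))) (g z)) atTop (𝓝 0) := by
      have : Tendsto (fun k => dist (g (x (φ k))) (g z)) atTop (𝓝 0) := by
        have := (tendsto_iff_dist_tendsto_zero.mp hp).comp hφ.tendsto_atTop
        simpa [Function.comp_def] using this
      simpa using this.const_mul lam
    exact squeeze_zero (fun k => dist_nonneg) (fun k => hcontr (x (φ k)) z (hφle k)) hb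
  have hcoin : f z = g z := tendsto_nhds_unique h2 h1
  refine ⟨⟨z, hcoin⟩, fun hcomp hcomm => ?_⟩
  -- g z is a coincidence point too
  set q := g z with hq
  have hfq : f q = g q := by
    rw [hq, hcomm z hcoin, hcoin]
  have hgq : g q = g z := by
    obtain ⟨w, hw1, hw2⟩ := hcomp q z hfq hcoin
    exact key q z w hfq hcoin hw1 hw2
  have hfix : f q = q ∧ g q = q := ⟨by rw [hfq, hgq], hgq⟩
  refine ⟨q, hfix, fun r ⟨hfr, hgr⟩ => ?_⟩
  have hcr : f r = g r := by rw [hfr, hgr]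
  obtain ⟨w, hw1, hw2⟩ := hcomp r z hcr hcoin
  have := key r z w hcr hcoin hw1 hw2
  rw [hgr] at this
  rw [this]
end

section
/- Let (X,⪯) be a partially ordered set with complete metric d, f, g : X → X with f(X) ⊆ g(X), g(X) closed, f g-nondecreasing. Suppose there exists λ ∈ (0,1/2) with d(fx,fy) ≤ λ·[d(gx,fx) + d(gy,fy)] for all x,y with gx ⪯ gy, there exists x₀ with gx₀ ⪯ fx₀, and (X,⪯,d) is g-regular. Then f and g have a coincidence point. -/
open Filter Topology

set_option maxHeartbeats 1000000 in
theorem ordered_coincidence_kannan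
    {X : Type*} [PartialOrder X] [MetricSpace X] [CompleteSpace X]
    (f g : X → X) (hrange : Set.range f ⊆ Set.range g)
    (hclosed : IsClosed (Set.range g))
    (hmonof : ∀ x y : X, g x ≤ g y → f x ≤ f y)
    (lam : ℝ) (hlam0 : 0 < lam) (hlam1 : lam < 1 / 2)
    (hcontr : ∀ x y : X, g x ≤ g y →
      dist (f x) (f y) ≤ lam * (dist (g x) (f x) + dist (g y) (f y)))
    (hx0 : ∃ x0 : X, g x0 ≤ f x0)
    (hreg : ∀ (x : ℕ → X) (z : X), (∀ n, g (x n) ≤ g (x (n + 1))) →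
      Tendsto (fun n => g (x n)) atTop (𝓝 (g z)) →
      ∃ φ : ℕ → ℕ, StrictMono φ ∧ ∀ k, g (x (φ k)) ≤ g z) :
    ∃ z : X, f z = g z := by
  have hch : ∀ w : X, ∃ v, g v = f w := fun w => hrange ⟨w, rfl⟩
  choose h hh using hch
  obtain ⟨x0, hx00⟩ := hx0
  set x : ℕ → X := fun n => h^[n] x0 with hx
  have hxs : ∀ n, g (x (n + 1)) = f (x n) := by
    intro n
    simp only [hx, Function.iterate_succ_apply', hh]
  -- monotone
  have hmono : ∀ n, g (x n) ≤ g (x (n + 1)) := by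
    intro n
    induction n with
    | zero => rw [hxs 0]; simpa [hx] using hx00
    | succ n ih =>
      rw [hxs (n+1), hxs n]
      exact hmonof _ _ ih
  have h1lam : 0 < 1 - lam := by linarith
  set r : ℝ := lam / (1 - lam) with hr
  have hr0 : 0 ≤ r := le_of_lt (div_pos hlam0 h1lam)
  have hr1 : r < 1 := by
    rw [hr, div_lt_one h1lam]; linarith
  set D : ℕ → ℝ := fun n => dist (g (x n)) (g (x (n + 1))) with hD
  have hDstep : ∀ n, D (n + 1) ≤ r * D n := by
    intro n
    have hc := hcontr (x n) (x (n + 1)) (hmono n)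
    rw [← hxs n, ← hxs (n + 1)] at hc
    have : D (n + 1) ≤ lam * (D n + D (n + 1)) := hc
    rw [hr, div_mul_eq_mul_div, le_div_iff₀ h1lam]
    nlinarith [this]
  have hDgeom : ∀ n, D n ≤ D 0 * r ^ n := by
    intro n
    induction n with
    | zero => simp
    | succ n ih =>
      calc D (n + 1) ≤ r * D n := hDstep n
        _ ≤ r * (D 0 * r ^ n) := by nlinarith
        _ = D 0 * r ^ (n + 1) := by ring
  have hcauchy : CauchySeq (fun n => g (x n)) :=
    cauchySeq_of_le_geometric r (D 0) hr1 (fun n => by simpa [mul_comm] using hDgeom n)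
  obtain ⟨y, hy⟩ := cauchySeq_tendsto_of_complete hcauchy
  have hymem : y ∈ Set.range g :=
    hclosed.mem_of_tendsto hy (Eventually.of_forall fun n => ⟨x n, rfl⟩)
  obtain ⟨z, hz⟩ := hymem
  subst hz
  obtain ⟨φ, hφmono, hφle⟩ := hreg x z hmono hy
  -- D tends to 0
  have hD0 : Tendsto D atTop (𝓝 0) := by
    have h1 : Tendsto (fun n => D 0 * r ^ n) atTop (𝓝 0) := by
      simpa using (tendsto_pow_atTop_nhds_zero_of_lt_one hr0 hr1).const_mul (D 0)
    refine squeeze_zero (fun n => dist_nonneg) hDgeom h1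
  have hφtop : Tendsto φ atTop atTop := hφmono.tendsto_atTop
  -- key inequality for each k
  have hkey : ∀ k, dist (g z) (f z) ≤
      dist (g z) (g (x (φ k + 1))) + lam * (D (φ k) + dist (g z) (f z)) := by
    intro k
    have hc := hcontr (x (φ k)) z (hφle k)
    rw [← hxs (φ k)] at hc
    calc dist (g z) (f z)
        ≤ dist (g z) (g (x (φ k + 1))) + dist (g (x (φ k + 1))) (f z) := dist_triangle _ _ _
      _ ≤ dist (g z) (g (x (φ k + 1))) + lam * (D (φ k) + dist (g z) (f z)) := by
          exact add_le_add (le_refl _) hc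
  -- take limits
  have ht1 : Tendsto (fun k => g (x (φ k + 1))) atTop (𝓝 (g z)) :=
    hy.comp ((tendsto_add_atTop_nat 1).comp hφtop)
  have hlim : Tendsto (fun k => dist (g z) (g (x (φ k + 1))) + lam * (D (φ k) + dist (g z) (f z)))
      atTop (𝓝 (0 + lam * (0 + dist (g z) (f z)))) := by
    have h2 : Tendsto (fun k => dist (g z) (g (x (φ k + 1)))) atTop (𝓝 0) := by
      simpa using (tendsto_const_nhds : Tendsto (fun _ : ℕ => g z) atTop (𝓝 (g z))).dist ht1
    have h3 : Tendsto (fun k => D (φ k)) atTop (𝓝 0) := hD0.comp hφtop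
    exact h2.add (((h3.add tendsto_const_nhds)).const_mul lam)
  have hfin : dist (g z) (f z) ≤ 0 + lam * (0 + dist (g z) (f z)) :=
    ge_of_tendsto hlim (Eventually.of_forall hkey)
  have hd0 : dist (g z) (f z) = 0 := by nlinarith [dist_nonneg (x := g z) (y := f z)]
  exact ⟨z, (dist_eq_zero.mp hd0).symm⟩
end

section
/- Let (X,d) be a complete metric space, A₁, A₂ nonempty closed subsets of X, Y = A₁ ∪ A₂, and f, g : Y → Y with: (i) g(A₁), g(A₂) closed; (ii) f(A₁) ⊆ g(A₂) and f(A₂) ⊆ g(A₁); (iii) g injective; (iv) there is a (c)-comparison function ψ with d(fx,fy) ≤ ψ(M(gx,gy)) for all (x,y) ∈ A₁ × A₂, where M(gx,gy) = max{d(gx,gy), (d(gx,fx)+d(gy,fy))/2, (d(gx,fy)+d(gy,fx))/2}. Then f and g have a coincidence point z ∈ A₁ ∩ A₂; if moreover f, g commute at coincidence points, they have a unique common fixed point in A₁ ∩ A₂. -/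
theorem cyclic_coincidence_common_fixed_point
    {X : Type*} [MetricSpace X] [CompleteSpace X]
    (A₁ A₂ : Set X) (hA₁ne : A₁.Nonempty) (hA₂ne : A₂.Nonempty)
    (hA₁cl : IsClosed A₁) (hA₂cl : IsClosed A₂)
    (f g : X → X)
    (hfY : Set.MapsTo f (A₁ ∪ A₂) (A₁ ∪ A₂)) (hgY : Set.MapsTo g (A₁ ∪ A₂) (A₁ ∪ A₂))
    (hgA₁cl : IsClosed (g '' A₁)) (hgA₂cl : IsClosed (g '' A₂))
    (hf₁ : f '' A₁ ⊆ g '' A₂) (hf₂ : f '' A₂ ⊆ g '' A₁)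
    (hginj : Set.InjOn g (A₁ ∪ A₂))
    (ψ : ℝ → ℝ)
    (hmono : ∀ s t : ℝ, 0 ≤ s → s ≤ t → ψ s ≤ ψ t)
    (hnonneg : ∀ t : ℝ, 0 ≤ t → 0 ≤ ψ t)
    (hsum : ∀ t : ℝ, 0 < t → Summable (fun n : ℕ => ψ^[n + 1] t))
    (hcontr : ∀ x ∈ A₁, ∀ y ∈ A₂, dist (f x) (f y) ≤
      ψ (max (dist (g x) (g y)) (max ((dist (g x) (f x) + dist (g y) (f y)) / 2)
        ((dist (g x) (f y) + dist (g y) (f x)) / 2)))) :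
    (∃ z ∈ A₁ ∩ A₂, f z = g z) ∧
      ((∀ z ∈ A₁ ∪ A₂, f z = g z → f (g z) = g (f z)) →
        ∃! z : X, z ∈ A₁ ∩ A₂ ∧ f z = z ∧ g z = z) := by
  classical
  obtain ⟨x₀, hx₀⟩ := hA₁ne
  -- ψ is strictly below the identity on (0, ∞)
  have ψ_lt : ∀ t : ℝ, 0 < t → ψ t < t := by
    intro t ht
    by_contra hcon
    push_neg at hcon
    have key : ∀ n : ℕ, t ≤ ψ^[n + 1] t := by
      intro n
      induction n with
      | zero => simpa using hcon
      | succ k ih =>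
        have h1 : ψ t ≤ ψ (ψ^[k + 1] t) := hmono t _ ht.le ih
        have h2 : ψ^[k + 1 + 1] t = ψ (ψ^[k + 1] t) := Function.iterate_succ_apply' ψ (k + 1) t
        rw [h2]; exact hcon.trans h1
    have h0 : Filter.Tendsto (fun n : ℕ => ψ^[n + 1] t) Filter.atTop (nhds 0) :=
      (hsum t ht).tendsto_atTop_zero
    have : t ≤ 0 := ge_of_tendsto h0 (Filter.Eventually.of_forall key)
    linarith
  have ψ0 : ψ 0 = 0 := by
    rcases (hnonneg 0 le_rfl).lt_or_eq with h | h
    · exact absurd (ψ_lt _ h) (not_lt.mpr (hmono 0 _ le_rfl h.le))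
    · exact h.symm
  have fix_eq : ∀ a b : X, dist a b ≤ ψ (dist a b) → a = b := by
    intro a b h
    by_contra hne
    have h0 : 0 < dist a b := dist_pos.mpr hne
    linarith [ψ_lt _ h0]
  have Msimp : ∀ a b : X,
      max (dist a b) (max ((dist a a + dist b b) / 2) ((dist a b + dist b a) / 2)) = dist a b := by
    intro a b
    rw [dist_self, dist_self, dist_comm b a]
    have h1 : ((0 : ℝ) + 0) / 2 = 0 := by norm_num
    have h2 : (dist a b + dist a b) / 2 = dist a b := by ring
    rw [h1, h2, max_eq_right dist_nonneg, max_self]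
  -- symmetric version of the contraction hypothesis
  have hcontr' : ∀ p q : X, (p ∈ A₁ ∧ q ∈ A₂) ∨ (p ∈ A₂ ∧ q ∈ A₁) →
      dist (f p) (f q) ≤
        ψ (max (dist (g p) (g q)) (max ((dist (g p) (f p) + dist (g q) (f q)) / 2)
          ((dist (g p) (f q) + dist (g q) (f p)) / 2))) := by
    rintro p q (⟨hp, hq⟩ | ⟨hp, hq⟩)
    · exact hcontr p hp q hq
    · have h := hcontr q hq p hp
      have e : max (dist (g q) (g p)) (max ((dist (g q) (f q) + dist (g p) (f p)) / 2)
          ((dist (g q) (f p) + dist (g p) (f q)) / 2)) =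
          max (dist (g p) (g q)) (max ((dist (g p) (f p) + dist (g q) (f q)) / 2)
          ((dist (g p) (f q) + dist (g q) (f p)) / 2)) := by
        rw [dist_comm (g q) (g p), add_comm (dist (g q) (f q)) (dist (g p) (f p)),
          add_comm (dist (g q) (f p)) (dist (g p) (f q))]
      rw [dist_comm (f p) (f q)]
      rw [e] at h
      exact h
  -- membership of g-preimages
  have mem2 : ∀ u ∈ A₁, ∀ v ∈ A₁ ∪ A₂, g v = f u → v ∈ A₂ := by
    intro u hu v hv hgv
    obtain ⟨v', hv', e⟩ := hf₁ ⟨u, hu, rfl⟩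
    have : v = v' := hginj hv (Or.inr hv') (by rw [hgv, e])
    rwa [this]
  have mem1 : ∀ u ∈ A₂, ∀ v ∈ A₁ ∪ A₂, g v = f u → v ∈ A₁ := by
    intro u hu v hv hgv
    obtain ⟨v', hv', e⟩ := hf₂ ⟨u, hu, rfl⟩
    have : v = v' := hginj hv (Or.inl hv') (by rw [hgv, e])
    rwa [this]
  -- the step function and the Picard-type sequence
  set s : X → X := fun u => if h : ∃ v, v ∈ A₁ ∪ A₂ ∧ g v = f u then h.choose else u with hs_def
  have hs : ∀ u ∈ A₁ ∪ A₂, s u ∈ A₁ ∪ A₂ ∧ g (s u) = f u := by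
    intro u hu
    have hex : ∃ v, v ∈ A₁ ∪ A₂ ∧ g v = f u := by
      rcases hu with hu | hu
      · obtain ⟨v, hv, e⟩ := hf₁ ⟨u, hu, rfl⟩; exact ⟨v, Or.inr hv, e⟩
      · obtain ⟨v, hv, e⟩ := hf₂ ⟨u, hu, rfl⟩; exact ⟨v, Or.inl hv, e⟩
    simp only [hs_def, dif_pos hex]
    exact hex.choose_spec
  set x : ℕ → X := fun n => s^[n] x₀ with hx_def
  have hxsucc : ∀ n, x (n + 1) = s (x n) := by
    intro n
    simp only [hx_def]
    exact Function.iterate_succ_apply' s n x₀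
  have hxmem : ∀ n, (Even n → x n ∈ A₁) ∧ (Odd n → x n ∈ A₂) := by
    intro n
    induction n with
    | zero =>
      refine ⟨fun _ => ?_, fun h => absurd h (by simp [Nat.odd_iff])⟩
      simpa [hx_def] using hx₀
    | succ k ih =>
      have hkY : x k ∈ A₁ ∪ A₂ := by
        rcases Nat.even_or_odd k with h | h
        · exact Or.inl (ih.1 h)
        · exact Or.inr (ih.2 h)
      have hsk := hs (x k) hkY
      rw [← hxsucc k] at hsk
      constructor
      · intro he
        have hk : Odd k := by
          rw [Nat.even_iff] at he; rw [Nat.odd_iff]; omega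
        exact mem1 (x k) (ih.2 hk) (x (k + 1)) hsk.1 hsk.2
      · intro ho
        have hk : Even k := by
          rw [Nat.odd_iff] at ho; rw [Nat.even_iff]; omega
        exact mem2 (x k) (ih.1 hk) (x (k + 1)) hsk.1 hsk.2
  have hxY : ∀ n, x n ∈ A₁ ∪ A₂ := by
    intro n
    rcases Nat.even_or_odd n with h | h
    · exact Or.inl ((hxmem n).1 h)
    · exact Or.inr ((hxmem n).2 h)
  have hgx : ∀ n, g (x (n + 1)) = f (x n) := by
    intro n
    rw [hxsucc n]
    exact (hs (x n) (hxY n)).2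
  -- one-step estimate
  have hd : ∀ n, dist (f (x (n + 1))) (f (x (n + 2))) ≤ ψ (dist (f (x n)) (f (x (n + 1)))) := by
    intro n
    have pair : (x (n + 1) ∈ A₁ ∧ x (n + 2) ∈ A₂) ∨ (x (n + 1) ∈ A₂ ∧ x (n + 2) ∈ A₁) := by
      rcases Nat.even_or_odd (n + 1) with h | h
      · refine Or.inl ⟨(hxmem (n + 1)).1 h, (hxmem (n + 2)).2 ?_⟩
        rw [Nat.even_iff] at h; rw [Nat.odd_iff]; omega
      · refine Or.inr ⟨(hxmem (n + 1)).2 h, (hxmem (n + 2)).1 ?_⟩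
        rw [Nat.odd_iff] at h; rw [Nat.even_iff]; omega
    have key := hcontr' (x (n + 1)) (x (n + 2)) pair
    rw [hgx n, hgx (n + 1), dist_self] at key
    set a := dist (f (x n)) (f (x (n + 1))) with ha
    set b := dist (f (x (n + 1))) (f (x (n + 2))) with hb
    have hc : dist (f (x n)) (f (x (n + 2))) ≤ a + b := dist_triangle _ _ _
    set c := dist (f (x n)) (f (x (n + 2))) with hcc
    have han : (0 : ℝ) ≤ a := dist_nonneg
    have hbn : (0 : ℝ) ≤ b := dist_nonneg
    rcases le_or_gt b a with hba | hba
    · exact key.trans (hmono _ _ (le_trans han (le_max_left _ _))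
        (max_le le_rfl (max_le (by linarith) (by linarith))))
    · exfalso
      have h1 : max a (max ((a + b) / 2) ((c + 0) / 2)) ≤ b :=
        max_le hba.le (max_le (by linarith) (by linarith))
      have h2 : b ≤ ψ b := key.trans (hmono _ _ (le_trans han (le_max_left _ _)) h1)
      have := ψ_lt b (lt_of_le_of_lt han hba)
      linarith
  -- iterated estimate
  have hdn : ∀ n, dist (f (x n)) (f (x (n + 1))) ≤ ψ^[n] (dist (f (x 0)) (f (x 1))) := by
    intro n
    induction n with
    | zero => simp
    | succ k ih =>
      calc dist (f (x (k + 1))) (f (x (k + 2))) ≤ ψ (dist (f (x k)) (f (x (k + 1)))) := hd k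
      _ ≤ ψ (ψ^[k] (dist (f (x 0)) (f (x 1)))) := hmono _ _ dist_nonneg ih
      _ = ψ^[k + 1] (dist (f (x 0)) (f (x 1))) :=
          (Function.iterate_succ_apply' ψ k _).symm
  have hsum' : Summable fun n : ℕ => ψ^[n] (dist (f (x 0)) (f (x 1))) := by
    rcases (dist_nonneg : (0 : ℝ) ≤ dist (f (x 0)) (f (x 1))).lt_or_eq with h | h
    · exact (summable_nat_add_iff 1).mp (hsum _ h)
    · have hz : ∀ n : ℕ, ψ^[n] (dist (f (x 0)) (f (x 1))) = 0 := by
        intro n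
        rw [← h]
        induction n with
        | zero => simp
        | succ k ih => rw [Function.iterate_succ_apply', ih, ψ0]
      simp only [hz]
      exact summable_zero
  have hcauchy : CauchySeq fun n => f (x n) :=
    cauchySeq_of_dist_le_of_summable _ hdn hsum'
  obtain ⟨l, hl⟩ := cauchySeq_tendsto_of_complete hcauchy
  -- the limit lies in g '' A₁ ∩ g '' A₂
  have hmono1 : Filter.Tendsto (fun n : ℕ => 2 * n + 1) Filter.atTop Filter.atTop :=
    Filter.tendsto_atTop_mono (fun n => by simp only [id_eq]; omega) Filter.tendsto_id
  have hmono2 : Filter.Tendsto (fun n : ℕ => 2 * n) Filter.atTop Filter.atTop :=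
    Filter.tendsto_atTop_mono (fun n => by simp only [id_eq]; omega) Filter.tendsto_id
  have hl1 : l ∈ g '' A₁ := by
    refine hgA₁cl.mem_of_tendsto (hl.comp hmono1) (Filter.Eventually.of_forall fun n => ?_)
    exact hf₂ ⟨x (2 * n + 1), (hxmem _).2 (Nat.odd_iff.mpr (by omega)), rfl⟩
  have hl2 : l ∈ g '' A₂ := by
    refine hgA₂cl.mem_of_tendsto (hl.comp hmono2) (Filter.Eventually.of_forall fun n => ?_)
    exact hf₁ ⟨x (2 * n), (hxmem _).1 (Nat.even_iff.mpr (by omega)), rfl⟩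
  obtain ⟨z, hz₁, hgz⟩ := hl1
  obtain ⟨z₂, hz₂', e₂⟩ := hl2
  have hzz : z = z₂ := hginj (Or.inl hz₁) (Or.inr hz₂') (by rw [hgz, e₂])
  have hz : z ∈ A₁ ∩ A₂ := ⟨hz₁, by rw [hzz]; exact hz₂'⟩
  -- the limit is a coincidence point
  have hfz : f z = l := by
    by_contra hne
    set ε := dist (f z) l with hε
    have hε0 : 0 < ε := dist_pos.mpr hne
    obtain ⟨N, hN⟩ := (Metric.tendsto_atTop.mp hl) (ε / 4) (by linarith)
    have h1 : dist (f (x (2 * N))) l < ε / 4 := hN (2 * N) (by omega)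
    have h2 : dist (f (x (2 * N + 1))) l < ε / 4 := hN (2 * N + 1) (by omega)
    have key := hcontr z hz.1 (x (2 * N + 1)) ((hxmem _).2 (Nat.odd_iff.mpr (by omega)))
    rw [hgz, hgx (2 * N)] at key
    have t1 : dist l (f (x (2 * N))) < ε / 4 := by rw [dist_comm]; exact h1
    have t2 : dist l (f (x (2 * N + 1))) < ε / 4 := by rw [dist_comm]; exact h2
    have t3 : dist (f (x (2 * N))) (f (x (2 * N + 1))) ≤
        dist (f (x (2 * N))) l + dist l (f (x (2 * N + 1))) := dist_triangle _ _ _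
    have t4 : dist (f (x (2 * N))) (f z) ≤ dist (f (x (2 * N))) l + dist l (f z) :=
      dist_triangle _ _ _
    have t5 : dist l (f z) = ε := by rw [dist_comm]
    have hM : max (dist l (f (x (2 * N)))) (max ((dist l (f z) +
        dist (f (x (2 * N))) (f (x (2 * N + 1)))) / 2)
        ((dist l (f (x (2 * N + 1))) + dist (f (x (2 * N))) (f z)) / 2)) ≤ 3 * ε / 4 := by
      apply max_le (by linarith)
      apply max_le (by linarith) (by linarith)
    have hMn : (0 : ℝ) ≤ max (dist l (f (x (2 * N)))) (max ((dist l (f z) +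
        dist (f (x (2 * N))) (f (x (2 * N + 1)))) / 2)
        ((dist l (f (x (2 * N + 1))) + dist (f (x (2 * N))) (f z)) / 2)) :=
      le_trans dist_nonneg (le_max_left _ _)
    have key2 : dist (f z) (f (x (2 * N + 1))) ≤ ψ (3 * ε / 4) :=
      key.trans (hmono _ _ hMn hM)
    have tri : dist (f z) l ≤ dist (f z) (f (x (2 * N + 1))) + dist (f (x (2 * N + 1))) l :=
      dist_triangle _ _ _
    have hψ34 : ψ (3 * ε / 4) < 3 * ε / 4 := ψ_lt _ (by linarith)
    rw [← hε] at tri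
    linarith
  have hfzgz : f z = g z := hfz.trans hgz.symm
  refine ⟨⟨z, hz, hfzgz⟩, fun hcomm => ?_⟩
  -- common fixed point
  have hwY : g z ∈ A₁ ∪ A₂ := hgY (Or.inl hz.1)
  have hcz := hcomm z (Or.inl hz.1) hfzgz
  have hfw_gw : f (g z) = g (g z) := by rw [hcz, hfzgz]
  have pair : (z ∈ A₁ ∧ g z ∈ A₂) ∨ (z ∈ A₂ ∧ g z ∈ A₁) := by
    rcases hwY with h | h
    · exact Or.inr ⟨hz.2, h⟩
    · exact Or.inl ⟨hz.1, h⟩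
  have key := hcontr' z (g z) pair
  rw [hfw_gw, hfzgz, Msimp] at key
  have hggz : g z = g (g z) := fix_eq _ _ key
  have hgw : g (g z) = g z := hggz.symm
  have hfw : f (g z) = g z := hfw_gw.trans hgw
  -- g z belongs to A₁ ∩ A₂
  have hw1 : g z ∈ g '' A₁ := hf₂ ⟨z, hz.2, hfzgz⟩
  have hw2 : g z ∈ g '' A₂ := hf₁ ⟨z, hz.1, hfzgz⟩
  obtain ⟨a, ha, hga⟩ := hw1
  obtain ⟨b, hb, hgb⟩ := hw2
  have haw : a = g z := hginj (Or.inl ha) hwY (hga.trans hggz)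
  have hbw : b = g z := hginj (Or.inr hb) hwY (hgb.trans hggz)
  have hwA : g z ∈ A₁ ∩ A₂ := ⟨haw ▸ ha, hbw ▸ hb⟩
  refine ⟨g z, ⟨hwA, hfw, hgw⟩, ?_⟩
  rintro u ⟨huA, hfu, hgu⟩
  have key2 := hcontr u huA.1 (g z) hwA.2
  rw [hfu, hgu, hfw, hgw, Msimp] at key2
  exact fix_eq u (g z) key2
end

section
/- Let (X,d) be a complete metric space, A₁, A₂ nonempty closed subsets, Y = A₁ ∪ A₂, and f, g : Y → Y with g(A₁), g(A₂) closed, f(A₁) ⊆ g(A₂), f(A₂) ⊆ g(A₁), g injective, and there exists λ ∈ (0,1) with d(fx,fy) ≤ λ·d(gx,gy) for all (x,y) ∈ A₁ × A₂. Then f and g have a coincidence point in A₁ ∩ A₂, and if f, g commute at coincidence points they have a unique common fixed point belonging to A₁ ∩ A₂. -/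
theorem cyclic_coincidence_common_fixed_point_banach
    {X : Type*} [MetricSpace X] [CompleteSpace X]
    (A₁ A₂ : Set X) (hA₁ne : A₁.Nonempty) (hA₂ne : A₂.Nonempty)
    (hA₁cl : IsClosed A₁) (hA₂cl : IsClosed A₂)
    (f g : X → X)
    (hfY : Set.MapsTo f (A₁ ∪ A₂) (A₁ ∪ A₂)) (hgY : Set.MapsTo g (A₁ ∪ A₂) (A₁ ∪ A₂))
    (hgA₁cl : IsClosed (g '' A₁)) (hgA₂cl : IsClosed (g '' A₂))
    (hf₁ : f '' A₁ ⊆ g '' A₂) (hf₂ : f '' A₂ ⊆ g '' A₁)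
    (hginj : Set.InjOn g (A₁ ∪ A₂))
    (lam : ℝ) (hlam0 : 0 < lam) (hlam1 : lam < 1)
    (hcontr : ∀ x ∈ A₁, ∀ y ∈ A₂, dist (f x) (f y) ≤ lam * dist (g x) (g y)) :
    (∃ z ∈ A₁ ∩ A₂, f z = g z) ∧
      ((∀ z ∈ A₁ ∪ A₂, f z = g z → f (g z) = g (f z)) →
        ∃! z : X, z ∈ A₁ ∩ A₂ ∧ f z = z ∧ g z = z) := by
  classical
  have hY1 : A₁ ⊆ A₁ ∪ A₂ := Set.subset_union_left
  have hY2 : A₂ ⊆ A₁ ∪ A₂ := Set.subset_union_right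
  -- the "shift" map T with g (T x) = f x
  set T : X → X := fun x => if h : ∃ y, y ∈ A₁ ∪ A₂ ∧ g y = f x then h.choose else x with hTdef
  have hTspec : ∀ x ∈ A₁ ∪ A₂, T x ∈ A₁ ∪ A₂ ∧ g (T x) = f x := by
    intro x hx
    have h : ∃ y, y ∈ A₁ ∪ A₂ ∧ g y = f x := by
      rcases hx with hx | hx
      · obtain ⟨y, hy, hyx⟩ := hf₁ ⟨x, hx, rfl⟩
        exact ⟨y, hY2 hy, hyx⟩
      · obtain ⟨y, hy, hyx⟩ := hf₂ ⟨x, hx, rfl⟩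
        exact ⟨y, hY1 hy, hyx⟩
    simp only [hTdef, dif_pos h]
    exact ⟨h.choose_spec.1, h.choose_spec.2⟩
  have hTswap₁ : ∀ x ∈ A₁, T x ∈ A₂ := by
    intro x hx
    obtain ⟨hTY, hTg⟩ := hTspec x (hY1 hx)
    obtain ⟨y, hy, hyx⟩ := hf₁ ⟨x, hx, rfl⟩
    have : T x = y := hginj hTY (hY2 hy) (by rw [hTg, hyx])
    rwa [this]
  have hTswap₂ : ∀ x ∈ A₂, T x ∈ A₁ := by
    intro x hx
    obtain ⟨hTY, hTg⟩ := hTspec x (hY2 hx)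
    obtain ⟨y, hy, hyx⟩ := hf₂ ⟨x, hx, rfl⟩
    have : T x = y := hginj hTY (hY1 hy) (by rw [hTg, hyx])
    rwa [this]
  obtain ⟨a, ha⟩ := hA₁ne
  set u : ℕ → X := fun n => T^[n] a with hudef
  have hu : ∀ n, u (n + 1) = T (u n) := fun n => Function.iterate_succ_apply' T n a
  have hu0 : u 0 = a := rfl
  have hmem : ∀ n, u (2 * n) ∈ A₁ ∧ u (2 * n + 1) ∈ A₂ := by
    intro n
    induction n with
    | zero =>
      refine ⟨by simpa [hu0] using ha, ?_⟩
      rw [show 2 * 0 + 1 = 0 + 1 by ring, hu, hu0]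
      exact hTswap₁ a ha
    | succ n ih =>
      have h1 : u (2 * (n + 1)) ∈ A₁ := by
        rw [show 2 * (n + 1) = (2 * n + 1) + 1 by ring, hu]
        exact hTswap₂ _ ih.2
      refine ⟨h1, ?_⟩
      rw [hu]
      exact hTswap₁ _ h1
  have huY : ∀ n, u n ∈ A₁ ∪ A₂ := by
    intro n
    rcases Nat.even_or_odd n with ⟨k, hk⟩ | ⟨k, hk⟩
    · rw [hk, show k + k = 2 * k by ring]; exact hY1 (hmem k).1
    · rw [hk]; exact hY2 (hmem k).2
  have hgu : ∀ n, g (u (n + 1)) = f (u n) := by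
    intro n; rw [hu]; exact (hTspec _ (huY n)).2
  set v : ℕ → X := fun n => g (u n) with hvdef
  -- contraction step
  have hstep : ∀ n, dist (v (n + 1)) (v (n + 2)) ≤ lam * dist (v n) (v (n + 1)) := by
    intro n
    have h1 : v (n + 1) = f (u n) := hgu n
    have h2 : v (n + 2) = f (u (n + 1)) := hgu (n + 1)
    have key : dist (f (u n)) (f (u (n + 1))) ≤ lam * dist (g (u n)) (g (u (n + 1))) := ?_
    · calc dist (v (n + 1)) (v (n + 2)) = dist (f (u n)) (f (u (n + 1))) := by rw [h1, h2]
        _ ≤ lam * dist (g (u n)) (g (u (n + 1))) := key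
    rcases Nat.even_or_odd n with ⟨k, hk⟩ | ⟨k, hk⟩
    · have hn1 : u n ∈ A₁ := by rw [hk, show k + k = 2 * k by ring]; exact (hmem k).1
      have hn2 : u (n + 1) ∈ A₂ := by
        rw [hk, show k + k + 1 = 2 * k + 1 by ring]; exact (hmem k).2
      exact hcontr _ hn1 _ hn2
    · have hn1 : u n ∈ A₂ := by rw [hk]; exact (hmem k).2
      have hn2 : u (n + 1) ∈ A₁ := by
        rw [hk, show 2 * k + 1 + 1 = 2 * (k + 1) by ring]; exact (hmem (k + 1)).1
      rw [dist_comm (f (u n)) (f (u (n + 1))), dist_comm (g (u n)) (g (u (n + 1)))]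
      exact hcontr _ hn2 _ hn1
  have hgeom : ∀ n, dist (v n) (v (n + 1)) ≤ dist (v 0) (v 1) * lam ^ n := by
    intro n
    induction n with
    | zero => simp
    | succ n ih =>
      calc dist (v (n + 1)) (v (n + 2)) ≤ lam * dist (v n) (v (n + 1)) := hstep n
        _ ≤ lam * (dist (v 0) (v 1) * lam ^ n) := by
            exact mul_le_mul_of_nonneg_left ih hlam0.le
        _ = dist (v 0) (v 1) * lam ^ (n + 1) := by ring
  have hcauchy : CauchySeq v := cauchySeq_of_le_geometric lam _ hlam1 hgeom
  obtain ⟨p, hp⟩ := cauchySeq_tendsto_of_complete hcauchy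
  -- subsequence limits
  have heven : Filter.Tendsto (fun n => v (2 * n)) Filter.atTop (nhds p) :=
    hp.comp (Filter.tendsto_atTop_atTop.mpr fun b => ⟨b, fun a ha => by omega⟩)
  have hodd : Filter.Tendsto (fun n => v (2 * n + 1)) Filter.atTop (nhds p) :=
    hp.comp (Filter.tendsto_atTop_atTop.mpr fun b => ⟨b, fun a ha => by omega⟩)
  have hodd2 : Filter.Tendsto (fun n => v (2 * n + 2)) Filter.atTop (nhds p) :=
    hp.comp (Filter.tendsto_atTop_atTop.mpr fun b => ⟨b, fun a ha => by omega⟩)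
  have hpA₁ : p ∈ g '' A₁ :=
    hgA₁cl.mem_of_tendsto heven
      (Filter.Eventually.of_forall fun n => ⟨u (2 * n), (hmem n).1, rfl⟩)
  have hpA₂ : p ∈ g '' A₂ :=
    hgA₂cl.mem_of_tendsto hodd
      (Filter.Eventually.of_forall fun n => ⟨u (2 * n + 1), (hmem n).2, rfl⟩)
  obtain ⟨z₁, hz₁, hgz₁⟩ := hpA₁
  obtain ⟨z₂, hz₂, hgz₂⟩ := hpA₂
  have hz12 : z₁ = z₂ := hginj (hY1 hz₁) (hY2 hz₂) (hgz₁.trans hgz₂.symm)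
  have hzA : z₁ ∈ A₁ ∩ A₂ := ⟨hz₁, hz12 ▸ hz₂⟩
  set z := z₁ with hzdef
  -- f z = g z
  have hco : f z = g z := by
    have hlim1 : Filter.Tendsto (fun n => f (u (2 * n + 1))) Filter.atTop (nhds p) := by
      have : (fun n => f (u (2 * n + 1))) = fun n => v (2 * n + 2) := by
        funext n
        rw [hvdef]
        exact (hgu (2 * n + 1)).symm
      rw [this]; exact hodd2
    have hlim2 : Filter.Tendsto (fun n => f (u (2 * n + 1))) Filter.atTop (nhds (f z)) := by
      rw [tendsto_iff_dist_tendsto_zero]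
      have hb : ∀ n, dist (f (u (2 * n + 1))) (f z) ≤ lam * dist (g z) (v (2 * n + 1)) := by
        intro n
        rw [dist_comm]
        exact hcontr z hzA.1 _ (hmem n).2
      have hlimb : Filter.Tendsto (fun n => lam * dist (g z) (v (2 * n + 1)))
          Filter.atTop (nhds 0) := by
        have h0 : Filter.Tendsto (fun n => dist (g z) (v (2 * n + 1)))
            Filter.atTop (nhds (dist (g z) p)) := Filter.Tendsto.dist tendsto_const_nhds hodd
        have : dist (g z) p = 0 := by rw [hgz₁]; simp
        rw [this] at h0
        simpa using h0.const_mul lam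
      exact squeeze_zero (fun n => dist_nonneg) hb hlimb
    have := tendsto_nhds_unique hlim2 hlim1
    rw [this, hgz₁]
  refine ⟨⟨z, hzA, hco⟩, ?_⟩
  intro hcomm
  -- common fixed point
  set q := g z with hqdef
  have hqY : q ∈ A₁ ∪ A₂ := hgY (hY1 hzA.1)
  have hfq : f q = g q := by
    have h := hcomm z (hY1 hzA.1) hco
    rw [← hqdef] at h
    calc f q = g (f z) := h
      _ = g q := by rw [hco]
  have hdz : dist (f z) (f q) ≤ lam * dist (g z) (g q) := by
    rcases hqY with hq | hq
    · rw [dist_comm (f z) (f q), dist_comm (g z) (g q)]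
      exact hcontr q hq z hzA.2
    · exact hcontr z hzA.1 q hq
  have hfix : f q = q := by
    have h1 : dist q (f q) ≤ lam * dist q (f q) := by
      calc dist q (f q) = dist (f z) (f q) := by rw [hco]
        _ ≤ lam * dist (g z) (g q) := hdz
        _ = lam * dist q (f q) := by rw [← hqdef, hfq]
    have h2 : dist q (f q) = 0 := by nlinarith [dist_nonneg (x := q) (y := f q)]
    rw [dist_comm] at h2
    exact dist_eq_zero.mp h2
  have hgfix : g q = q := by rw [← hfq, hfix]
  -- q ∈ A₁ ∩ A₂ : q = f z ∈ g '' A₂ and g '' A₁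
  have hq1 : q ∈ g '' A₂ := hco ▸ hf₁ ⟨z, hzA.1, rfl⟩
  have hq2 : q ∈ g '' A₁ := hco ▸ hf₂ ⟨z, hzA.2, rfl⟩
  obtain ⟨w₁, hw₁, hgw₁⟩ := hq2
  obtain ⟨w₂, hw₂, hgw₂⟩ := hq1
  have hw12 : w₁ = w₂ := hginj (hY1 hw₁) (hY2 hw₂) (hgw₁.trans hgw₂.symm)
  have hqw : q = w₁ := hginj hqY (hY1 hw₁) (by rw [hgfix, hgw₁])
  have hqA : q ∈ A₁ ∩ A₂ := ⟨hqw ▸ hw₁, hqw ▸ hw12 ▸ hw₂⟩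
  refine ⟨q, ⟨hqA, hfix, hgfix⟩, ?_⟩
  rintro r ⟨hrA, hfr, hgr⟩
  have hd : dist r q ≤ lam * dist r q := by
    calc dist r q = dist (f r) (f q) := by rw [hfr, hfix]
      _ ≤ lam * dist (g r) (g q) := hcontr r hrA.1 q hqA.2
      _ = lam * dist r q := by rw [hgr, hgfix]
  have : dist r q = 0 := by nlinarith [dist_nonneg (x := r) (y := q)]
  exact dist_eq_zero.mp this
end

section
/- Let (X,d) be a metric space, f, g : X → X, ψ a (c)-comparison function, and α : X × X → [0,∞) with α(gx,gy)·d(fx,fy) ≤ ψ(M(gx,gy)) for all x, y, where M(gx,gy) = max{d(gx,gy), (d(gx,fx)+d(gy,fy))/2, (d(gx,fy)+d(gy,fx))/2}. If {xₙ} satisfies fxₙ = gxₙ₊₁ and α(gxₙ, gxₙ₊₁) ≥ 1 for all n, and d(fxₙ, fxₙ₊₁) > 0 for all n, then d(fxₙ, fxₙ₊₁) ≤ ψⁿ(d(fx₀, fx₁)) for all n ≥ 1. -/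
theorem iterate_bound_for_picard_sequence
    {X : Type*} [MetricSpace X]
    (f g : X → X)
    (ψ : ℝ → ℝ)
    (hmono : ∀ s t : ℝ, 0 ≤ s → s ≤ t → ψ s ≤ ψ t)
    (hnonneg : ∀ t : ℝ, 0 ≤ t → 0 ≤ ψ t)
    (hsum : ∀ t : ℝ, 0 < t → Summable (fun n : ℕ => ψ^[n + 1] t))
    (α : X → X → ℝ) (hα : ∀ x y, 0 ≤ α x y)
    (hcontr : ∀ x y : X, α (g x) (g y) * dist (f x) (f y) ≤
      ψ (max (dist (g x) (g y)) (max ((dist (g x) (f x) + dist (g y) (f y)) / 2)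
        ((dist (g x) (f y) + dist (g y) (f x)) / 2))))
    (x : ℕ → X)
    (hpic : ∀ n : ℕ, f (x n) = g (x (n + 1)))
    (halpha : ∀ n : ℕ, 1 ≤ α (g (x n)) (g (x (n + 1))))
    (hpos : ∀ n : ℕ, 0 < dist (f (x n)) (f (x (n + 1)))) :
    ∀ n : ℕ, 1 ≤ n →
      dist (f (x n)) (f (x (n + 1))) ≤ ψ^[n] (dist (f (x 0)) (f (x 1))) := by
  -- ψ t < t for t > 0
  have hlt : ∀ t : ℝ, 0 < t → ψ t < t := by
    intro t ht
    by_contra h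
    push_neg at h
    have hiter : ∀ n : ℕ, t ≤ ψ^[n + 1] t := by
      intro n
      induction n with
      | zero => simpa using h
      | succ k ih =>
        calc t ≤ ψ t := h
        _ ≤ ψ (ψ^[k + 1] t) := hmono t _ ht.le ih
        _ = ψ^[k + 2] t := (Function.iterate_succ_apply' ψ (k + 1) t).symm
    have h0 := (hsum t ht).tendsto_atTop_zero
    obtain ⟨n, hn⟩ := (h0.eventually_lt_const ht).exists
    exact absurd (hiter n) (not_le.mpr hn)
  -- one-step contraction
  have step : ∀ n : ℕ,
      dist (f (x (n + 1))) (f (x (n + 2))) ≤ ψ (dist (f (x n)) (f (x (n + 1)))) := by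
    intro n
    set a := dist (f (x n)) (f (x (n + 1))) with ha
    set b := dist (f (x (n + 1))) (f (x (n + 2))) with hb
    have hc := hcontr (x (n + 1)) (x (n + 2))
    rw [← hpic n, ← hpic (n + 1)] at hc
    simp only [dist_self, add_zero] at hc
    have halph := halpha (n + 1)
    rw [← hpic n, ← hpic (n + 1)] at halph
    have hbge : b ≤ α (f (x n)) (f (x (n + 1))) * b :=
      le_mul_of_one_le_left dist_nonneg halph
    set M := max a (max ((a + b) / 2) (dist (f (x n)) (f (x (n + 2))) / 2)) with hM
    have hkey : b ≤ ψ M := le_trans hbge hc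
    have htri : dist (f (x n)) (f (x (n + 2))) ≤ a + b := dist_triangle _ _ _
    have hab : a ≤ max a b := le_max_left _ _
    have hba : b ≤ max a b := le_max_right _ _
    have hMle : M ≤ max a b := by
      apply max_le hab
      apply max_le <;> linarith
    have hM0 : 0 ≤ M := le_trans dist_nonneg (le_max_left _ _)
    have hkey2 : b ≤ ψ (max a b) := le_trans hkey (hmono M _ hM0 hMle)
    rcases le_total b a with hle | hle
    · rwa [max_eq_left hle] at hkey2
    · rw [max_eq_right hle] at hkey2
      have : ψ b < b := hlt b (hpos (n + 1))
      linarith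
  intro n hn
  induction n with
  | zero => omega
  | succ k ih =>
    rcases Nat.eq_or_lt_of_le hn with hk | hk
    · have h0 := step 0
      simpa [← hk] using h0
    · have hk1 : 1 ≤ k := by omega
      have hd := ih hk1
      calc dist (f (x (k + 1))) (f (x (k + 2))) ≤ ψ (dist (f (x k)) (f (x (k + 1)))) := step k
      _ ≤ ψ (ψ^[k] (dist (f (x 0)) (f (x 1)))) := hmono _ _ dist_nonneg hd
      _ = ψ^[k + 1] (dist (f (x 0)) (f (x 1))) := (Function.iterate_succ_apply' ψ k _).symm
end
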